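/- arXiv:2501.10916 — 6 statements merged into one kernel-verified Lean document; each statement's English description precedes it below -/
import Mathlib

section
/- The generating function for the total number of hooks of length 1 in all ℓ-regular partitions of n satisfies ∑_{n≥0} b_{ℓ,1}(n) q^n = ((q^ℓ;q^ℓ)_∞/(q;q)_∞) · (q/(1-q) - q^ℓ/(1-q^ℓ)) as formal power series. -/
open PowerSeries

/-- The `i`-th largest part (0-indexed) of a partition, or `0` if `i` is too large. -/
def partAt {n : ℕ} (p : Nat.Partition n) (i : ℕ) : ℕ :=
  ((p.parts.sort (· ≤ ·)).reverse).getD i 0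

/-- The number of parts of `p` exceeding `j`, i.e. the `j`-th column length (0-indexed). -/
def colAt {n : ℕ} (p : Nat.Partition n) (j : ℕ) : ℕ :=
  (p.parts.filter (fun a => j < a)).card

/-- The number of cells in the Young diagram of `p` whose hook length equals `t`.
The cell in row `i`, column `j` (0-indexed) has hook length
`(λᵢ - 1 - j) + (λ'ⱼ - 1 - i) + 1`. -/
def hookCount {n : ℕ} (p : Nat.Partition n) (t : ℕ) : ℕ :=
  ((Finset.range n ×ˢ Finset.range n).filter
    (fun ij => ij.2 < partAt p ij.1 ∧
      (partAt p ij.1 - ij.2) + (colAt p ij.2 - ij.1) - 1 = t)).card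

/-- `bCount ℓ t n` is the total number of hooks of length `t` over all `ℓ`-regular
partitions of `n` (partitions with no part divisible by `ℓ`). -/
def bCount (ℓ t n : ℕ) : ℕ :=
  ∑ p ∈ Finset.univ.filter (fun p : Nat.Partition n => ∀ a ∈ p.parts, ¬ ℓ ∣ a),
    hookCount p t

noncomputable instance : TopologicalSpace (PowerSeries ℚ) :=
  inferInstanceAs (TopologicalSpace ((Unit →₀ ℕ) → ℚ))

/-! ### Auxiliary material -/

open Finset

instance : T2Space (PowerSeries ℚ) :=
  inferInstanceAs (T2Space ((Unit →₀ ℕ) → ℚ))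

section TprodMachinery

lemma apply_eq_coeff (φ : ℚ⟦X⟧) (d : Unit →₀ ℕ) : φ d = coeff (R := ℚ) (d ()) φ := by
  have hd : Finsupp.single () (d ()) = d := by
    refine Finsupp.ext fun u => ?_
    cases u; simp
  have : PowerSeries.coeff (R := ℚ) (d ()) φ = MvPowerSeries.coeff (R := ℚ) d φ := by
    rw [PowerSeries.coeff, hd]
  rw [this]; rfl

lemma coeff_mul_eq_of_one (n : ℕ) (Q R : ℚ⟦X⟧)
    (hQ : ∀ i ≤ n, coeff (R := ℚ) i Q = coeff (R := ℚ) i (1 : ℚ⟦X⟧)) :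
    coeff (R := ℚ) n (Q * R) = coeff (R := ℚ) n R := by
  conv_rhs => rw [← one_mul R]
  rw [coeff_mul, coeff_mul]
  refine Finset.sum_congr rfl fun x hx => ?_
  rw [Finset.HasAntidiagonal.mem_antidiagonal] at hx
  rw [hQ x.1 (by omega)]

lemma coeff_mul_congr (n : ℕ) (a b b' : ℚ⟦X⟧)
    (h : ∀ m ≤ n, coeff (R := ℚ) m b = coeff (R := ℚ) m b') :
    coeff (R := ℚ) n (a * b) = coeff (R := ℚ) n (a * b') := by
  rw [coeff_mul, coeff_mul]
  refine Finset.sum_congr rfl fun x hx => ?_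
  rw [Finset.HasAntidiagonal.mem_antidiagonal] at hx
  rw [h x.2 (by omega)]

lemma coeff_prod_one_sub (m n : ℕ) (t : Finset ℕ) (ht : ∀ j ∈ t, n < m * (j+1)) :
    ∀ i ≤ n, coeff (R := ℚ) i (∏ j ∈ t, (1 - X ^ (m*(j+1)))) = coeff (R := ℚ) i (1 : ℚ⟦X⟧) := by
  induction t using Finset.induction with
  | empty => simp
  | @insert k t' hk ih =>
    intro i hi
    rw [Finset.prod_insert hk, sub_mul, one_mul, map_sub, coeff_X_pow_mul',
      if_neg (by have := ht k (mem_insert_self k t'); omega)]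
    rw [sub_zero]
    exact ih (fun j hj => ht j (mem_insert_of_mem hj)) i hi

lemma coeff_prod_range (m : ℕ) (hm : 1 ≤ m) (n : ℕ) (s : Finset ℕ)
    (hs : Finset.range (n+1) ⊆ s) :
    coeff (R := ℚ) n (∏ j ∈ s, (1 - X ^ (m*(j+1)))) =
    coeff (R := ℚ) n (∏ j ∈ Finset.range (n+1), (1 - X ^ (m*(j+1)))) := by
  rw [← Finset.prod_sdiff hs]
  exact coeff_mul_eq_of_one n _ _ (coeff_prod_one_sub m n _ (fun j hj => by
    have : ¬ j < n + 1 := fun h => (Finset.mem_sdiff.1 hj).2 (Finset.mem_range.2 h)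
    have : n + 1 ≤ j + 1 := by omega
    calc n < j + 1 := by omega
    _ ≤ m * (j+1) := by nlinarith))

/-- The limit of the infinite product `∏ (1 - X^(m(j+1)))`. -/
noncomputable def Lprod (m : ℕ) : ℚ⟦X⟧ :=
  PowerSeries.mk fun n => coeff (R := ℚ) n (∏ j ∈ Finset.range (n+1), (1 - X ^ (m*(j+1))))

lemma hasProd_aux (m : ℕ) (hm : 1 ≤ m) :
    HasProd (fun j : ℕ => 1 - (X : ℚ⟦X⟧) ^ (m*(j+1))) (Lprod m) := by
  rw [HasProd, SummationFilter.unconditional_filter]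
  refine tendsto_pi_nhds.2 ?_
  intro d
  refine tendsto_const_nhds.congr' ?_
  refine Filter.eventually_atTop.2 ⟨Finset.range (d () + 1), fun s hs => ?_⟩
  show (Lprod m) d = (∏ j ∈ s, (1 - (X : ℚ⟦X⟧) ^ (m*(j+1)))) d
  exact ((apply_eq_coeff _ d).trans (by
    rw [Lprod, coeff_mk, ← coeff_prod_range m hm (d ()) s hs])).trans
    (apply_eq_coeff _ d).symm

lemma tprod_eq_Lprod (m : ℕ) (hm : 1 ≤ m) :
    (∏' j : ℕ, (1 - (X : ℚ⟦X⟧) ^ (m*(j+1)))) = Lprod m :=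
  (hasProd_aux m hm).tprod_eq

lemma constantCoeff_Lprod (m : ℕ) (hm : 1 ≤ m) :
    constantCoeff (R := ℚ) (Lprod m) = 1 := by
  have : constantCoeff (R := ℚ) (Lprod m) = coeff (R := ℚ) 0 (Lprod m) := by
    rw [coeff_zero_eq_constantCoeff]
  rw [this, Lprod, coeff_mk]
  rw [show Finset.range (0+1) = {0} from rfl, Finset.prod_singleton, map_sub]
  simp only [coeff_X_pow]
  rw [if_neg (by omega)]
  simp

end TprodMachinery

section Conjugate

lemma sorted_getD_iff (r : List ℕ) (hr : List.Pairwise (· ≥ ·) r) (i j : ℕ) :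
    j < r.getD i 0 ↔ i < (r.filter (fun a => j < a)).length := by
  induction r generalizing i with
  | nil => simp
  | cons a t ih =>
    have hcons := List.pairwise_cons.1 hr
    cases i with
    | zero =>
      simp only [List.getD_cons_zero]
      constructor
      · intro h
        rw [List.filter_cons, if_pos (by simpa using h)]
        simp
      · intro h
        by_contra hja
        push_neg at hja
        rw [List.filter_cons, if_neg (by simpa using not_lt.2 hja),
          List.filter_eq_nil_iff.2 (fun b hb => by
            simp only [decide_eq_true_eq, not_lt]
            exact le_trans (hcons.1 b hb) hja)] at h
        simp at h
    | succ i =>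
      rw [List.getD_cons_succ]
      by_cases hja : j < a
      · rw [List.filter_cons, if_pos (by simpa using hja)]
        simp only [List.length_cons, Nat.succ_lt_succ_iff]
        exact ih hcons.2 i
      · push_neg at hja
        constructor
        · intro h
          exfalso
          rcases lt_or_ge i t.length with hi | hi
          · have : t.getD i 0 ∈ t := by
              rw [List.getD_eq_getElem _ _ hi]
              exact t.getElem_mem hi
            exact absurd h (not_lt.2 (le_trans (hcons.1 _ this) hja))
          · rw [List.getD_eq_default _ _ hi] at h
            omega
        · intro h
          exfalso
          rw [List.filter_cons, if_neg (by simpa using not_lt.2 hja),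
            List.filter_eq_nil_iff.2 (fun b hb => by
              simp only [decide_eq_true_eq, not_lt]
              exact le_trans (hcons.1 b hb) hja)] at h
          simp at h

lemma partAt_lt_iff {n : ℕ} (p : Nat.Partition n) (i j : ℕ) :
    j < partAt p i ↔ i < colAt p j := by
  have hsorted : ((p.parts.sort (· ≤ ·)).reverse).Pairwise (· ≥ ·) := by
    rw [List.pairwise_reverse]
    exact (p.parts.pairwise_sort (· ≤ ·)).imp (fun {a b} hab => hab)
  rw [partAt, sorted_getD_iff _ hsorted, colAt]
  have : p.parts.filter (fun a => j < a) = ↑((p.parts.sort (· ≤ ·)).filter (fun a => j < a)) := by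
    conv_lhs => rw [← p.parts.sort_eq (· ≤ ·)]
    rw [Multiset.filter_coe]
  rw [this, List.filter_reverse]
  simp

lemma partAt_mem {n : ℕ} (p : Nat.Partition n) (i : ℕ) (h : 0 < partAt p i) :
    partAt p i ∈ p.parts := by
  by_cases hi : i < ((p.parts.sort (· ≤ ·)).reverse).length
  · have hmem : partAt p i ∈ (p.parts.sort (· ≤ ·)).reverse := by
      rw [partAt, List.getD_eq_getElem _ _ hi]
      exact List.getElem_mem hi
    rwa [List.mem_reverse, Multiset.mem_sort] at hmem
  · rw [partAt, List.getD_eq_default _ _ (le_of_not_gt hi)] at h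
    omega

lemma part_le_n {n : ℕ} (p : Nat.Partition n) {v : ℕ} (hv : v ∈ p.parts) : v ≤ n :=
  p.parts_sum ▸ Multiset.le_sum_of_mem hv

lemma card_le_sum_aux (s : Multiset ℕ) (h : ∀ a ∈ s, 0 < a) : Multiset.card s ≤ s.sum := by
  revert h
  refine Multiset.induction_on s (by simp) ?_
  intro a s ih h
  simp only [Multiset.card_cons, Multiset.sum_cons]
  have h1 : 0 < a := h a (Multiset.mem_cons_self a s)
  have h2 : Multiset.card s ≤ s.sum := ih (fun b hb => h b (Multiset.mem_cons_of_mem hb))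
  omega

lemma card_parts_le {n : ℕ} (p : Nat.Partition n) : Multiset.card p.parts ≤ n := by
  have h := card_le_sum_aux p.parts (fun a ha => p.parts_pos ha)
  rwa [p.parts_sum] at h

lemma colAt_le_card {n : ℕ} (p : Nat.Partition n) (j : ℕ) :
    colAt p j ≤ Multiset.card p.parts :=
  Multiset.card_le_card (Multiset.filter_le _ _)

lemma colAt_succ_lt {n : ℕ} (p : Nat.Partition n) {v : ℕ} (hv : v ∈ p.parts) (j : ℕ)
    (hj : j < v) : colAt p v < colAt p j := by
  have h1 : Multiset.filter (fun a => v < a) p.parts + Multiset.filter (fun a => a = v) p.parts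
      ≤ p.parts.filter (fun a => j < a) := by
    have heq := Multiset.filter_add_filter (fun a => v < a) (fun a => a = v) p.parts
    have h0 : Multiset.filter (fun a => v < a ∧ a = v) p.parts = 0 := by
      rw [Multiset.filter_eq_nil]
      rintro a _ ⟨h, rfl⟩; omega
    rw [h0, add_zero] at heq
    rw [heq]
    apply Multiset.monotone_filter_right
    rintro a (h | rfl) <;> omega
  have h2 : 0 < Multiset.card (Multiset.filter (fun a => a = v) p.parts) := by
    rw [Multiset.card_pos_iff_exists_mem]
    exact ⟨v, Multiset.mem_filter.2 ⟨hv, rfl⟩⟩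
  have h3 := Multiset.card_le_card h1
  rw [Multiset.card_add] at h3
  unfold colAt
  omega

lemma hookCount_one {n : ℕ} (p : Nat.Partition n) :
    hookCount p 1 = p.parts.toFinset.card := by
  rw [hookCount]
  refine Finset.card_bij (fun ij _ => ij.2 + 1) ?_ ?_ ?_
  · rintro ⟨i, j⟩ h
    rw [Finset.mem_filter] at h
    obtain ⟨hmem, h1, h2⟩ := h
    dsimp only at h1 h2 ⊢
    have h3 : i < colAt p j := (partAt_lt_iff p i j).1 h1
    have h4 : partAt p i = j + 1 := by omega
    rw [Multiset.mem_toFinset, ← h4]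
    exact partAt_mem p i (by omega)
  · rintro ⟨i, j⟩ h ⟨i', j'⟩ h' hjj
    rw [Finset.mem_filter] at h h'
    obtain ⟨_, h1, h2⟩ := h
    obtain ⟨_, h1', h2'⟩ := h'
    dsimp only at h1 h2 h1' h2' hjj
    have h3 : i < colAt p j := (partAt_lt_iff p i j).1 h1
    have h3' : i' < colAt p j' := (partAt_lt_iff p i' j').1 h1'
    have hj : j = j' := by omega
    subst hj
    have hi : i = i' := by omega
    rw [hi]
  · intro v hv
    rw [Multiset.mem_toFinset] at hv
    have hv1 : 0 < v := p.parts_pos hv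
    have hvn : v ≤ n := part_le_n p hv
    have hcol : 0 < colAt p (v - 1) := by
      rw [colAt, Multiset.card_pos_iff_exists_mem]
      exact ⟨v, Multiset.mem_filter.2 ⟨hv, by omega⟩⟩
    have hic : colAt p (v - 1) - 1 < colAt p (v - 1) := by omega
    have hpa : v - 1 < partAt p (colAt p (v - 1) - 1) :=
      (partAt_lt_iff p (colAt p (v - 1) - 1) (v - 1)).2 hic
    have hupper : partAt p (colAt p (v - 1) - 1) ≤ v := by
      by_contra hgt
      push_neg at hgt
      have hlt : colAt p (v - 1) - 1 < colAt p v :=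
        (partAt_lt_iff p (colAt p (v - 1) - 1) v).1 hgt
      have := colAt_succ_lt p hv (v - 1) (by omega)
      omega
    refine ⟨⟨colAt p (v - 1) - 1, v - 1⟩, Finset.mem_filter.2 ⟨?_, ?_, ?_⟩,
      show v - 1 + 1 = v by omega⟩
    · rw [Finset.mem_product, Finset.mem_range, Finset.mem_range]
      have hc1 := colAt_le_card p (v - 1)
      have hc2 := card_parts_le p
      exact ⟨by omega, by omega⟩
    · exact hpa
    · show partAt p (colAt p (v - 1) - 1) - (v - 1)
        + (colAt p (v - 1) - (colAt p (v - 1) - 1)) - 1 = 1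
      omega

end Conjugate

section Counting

open scoped Classical

noncomputable def cS (S : ℕ → Prop) (n : ℕ) : ℕ :=
  (Finset.univ.filter fun p : Nat.Partition n => ∀ a ∈ p.parts, S a).card

noncomputable def PS (S : ℕ → Prop) : ℚ⟦X⟧ := PowerSeries.mk fun n => (cS S n : ℚ)

lemma cS_congr {S S' : ℕ → Prop} (h : ∀ a, S a ↔ S' a) (n : ℕ) : cS S n = cS S' n := by
  unfold cS
  congr 1
  ext p
  simp only [Finset.mem_filter, Finset.mem_univ, true_and]
  exact ⟨fun hp a ha => (h a).1 (hp a ha), fun hp a ha => (h a).2 (hp a ha)⟩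

lemma cS_zero (S : ℕ → Prop) : cS S 0 = 1 := by
  unfold cS
  rw [Finset.filter_true_of_mem, Finset.card_univ, Fintype.card_unique]
  intro p _ a ha
  exact absurd (p.parts_pos ha) (by have := part_le_n p ha; omega)

def consK (k n : ℕ) (hk : 0 < k) (hkn : k ≤ n) (q : Nat.Partition (n - k)) : Nat.Partition n :=
  ⟨k ::ₘ q.parts,
   fun {a} ha => by
     rcases Multiset.mem_cons.1 ha with rfl | h
     · exact hk
     · exact q.parts_pos h,
   by rw [Multiset.sum_cons, q.parts_sum]; omega⟩

def eraseK (k : ℕ) {m : ℕ} (q : Nat.Partition m) (hmem : k ∈ q.parts) :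
    Nat.Partition (m - k) :=
  ⟨q.parts.erase k,
   fun {a} ha => q.parts_pos (Multiset.mem_of_mem_erase ha),
   by
     have h1 : (k ::ₘ q.parts.erase k).sum = m := by
       rw [Multiset.cons_erase hmem, q.parts_sum]
     rw [Multiset.sum_cons] at h1
     omega⟩

noncomputable def cSk (S : ℕ → Prop) (k n : ℕ) : ℕ :=
  (Finset.univ.filter fun p : Nat.Partition n => (∀ a ∈ p.parts, S a) ∧ k ∈ p.parts).card

lemma cSk_eq (S : ℕ → Prop) (k n : ℕ) (hS : S k) (hk : 0 < k) (hkn : k ≤ n) :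
    cSk S k n = cS S (n - k) := by
  unfold cSk cS
  refine Finset.card_bij'
    (fun p hp => eraseK k p (Finset.mem_filter.1 hp).2.2)
    (fun q _ => consK k n hk hkn q) ?_ ?_ ?_ ?_
  · intro p hp
    refine Finset.mem_filter.2 ⟨Finset.mem_univ _, fun a ha => ?_⟩
    exact (Finset.mem_filter.1 hp).2.1 a (Multiset.mem_of_mem_erase ha)
  · intro q hq
    refine Finset.mem_filter.2 ⟨Finset.mem_univ _, fun a ha => ?_, ?_⟩
    · rcases Multiset.mem_cons.1 ha with rfl | h
      · exact hS
      · exact (Finset.mem_filter.1 hq).2 a h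
    · exact Multiset.mem_cons_self k _
  · intro p hp
    exact Nat.Partition.ext (Multiset.cons_erase (Finset.mem_filter.1 hp).2.2)
  · intro q hq
    exact Nat.Partition.ext (Multiset.erase_cons_head k q.parts)

lemma cSk_zero_of_gt (S : ℕ → Prop) (k n : ℕ) (hkn : n < k) : cSk S k n = 0 := by
  unfold cSk
  rw [Finset.card_eq_zero, Finset.filter_eq_empty_iff]
  rintro p - ⟨-, hmem⟩
  exact absurd (part_le_n p hmem) (by omega)

lemma cSk_zero_of_zero (S : ℕ → Prop) (n : ℕ) : cSk S 0 n = 0 := by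
  unfold cSk
  rw [Finset.card_eq_zero, Finset.filter_eq_empty_iff]
  rintro p - ⟨-, hmem⟩
  exact absurd (p.parts_pos hmem) (by omega)

lemma cSk_zero_of_not (S : ℕ → Prop) (k n : ℕ) (hS : ¬ S k) : cSk S k n = 0 := by
  unfold cSk
  rw [Finset.card_eq_zero, Finset.filter_eq_empty_iff]
  rintro p - ⟨hall, hmem⟩
  exact hS (hall k hmem)

lemma cS_split (S : ℕ → Prop) (k n : ℕ) (hS : S k) (hk : 0 < k) :
    cS S n = cS (fun a => S a ∧ a ≠ k) n + (if k ≤ n then cS S (n - k) else 0) := by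
  have hsplit := Finset.card_filter_add_card_filter_not
    (s := Finset.univ.filter fun p : Nat.Partition n => ∀ a ∈ p.parts, S a)
    (p := fun p => k ∈ p.parts)
  rw [Finset.filter_filter, Finset.filter_filter] at hsplit
  have e1 : (Finset.univ.filter fun p : Nat.Partition n =>
      (∀ a ∈ p.parts, S a) ∧ k ∈ p.parts).card = cSk S k n := by
    unfold cSk; congr 1
  have e2 : (Finset.univ.filter fun p : Nat.Partition n =>
      (∀ a ∈ p.parts, S a) ∧ ¬ k ∈ p.parts).card = cS (fun a => S a ∧ a ≠ k) n := by
    unfold cS; congr 1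
    ext p
    simp only [Finset.mem_filter, Finset.mem_univ, true_and]
    constructor
    · rintro ⟨h1, h2⟩ a ha
      exact ⟨h1 a ha, fun hak => h2 (hak ▸ ha)⟩
    · intro h
      exact ⟨fun a ha => (h a ha).1, fun hmem => (h k hmem).2 rfl⟩
  have e3 : cSk S k n = if k ≤ n then cS S (n - k) else 0 := by
    split_ifs with h
    · exact cSk_eq S k n hS hk h
    · exact cSk_zero_of_gt S k n (by omega)
  have e0 : (Finset.univ.filter fun p : Nat.Partition n => ∀ a ∈ p.parts, S a).card
      = cS S n := rfl
  omega

lemma cS_eq_zero (S : ℕ → Prop) (n : ℕ)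
    (h : ∀ p : Nat.Partition n, ¬ ∀ a ∈ p.parts, S a) : cS S n = 0 := by
  unfold cS
  rw [Finset.card_eq_zero, Finset.filter_eq_empty_iff]
  intro p _
  exact h p

lemma PS_congr {S S' : ℕ → Prop} (h : ∀ a, S a ↔ S' a) : PS S = PS S' := by
  refine PowerSeries.ext fun n => ?_
  simp only [PS, coeff_mk]
  rw [cS_congr h n]

lemma PS_mul_one_sub (S : ℕ → Prop) (k : ℕ) (hS : S k) (hk : 0 < k) :
    PS S * (1 - X ^ k) = PS (fun a => S a ∧ a ≠ k) := by
  refine PowerSeries.ext fun n => ?_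
  rw [mul_sub, mul_one, map_sub, PowerSeries.coeff_mul_X_pow']
  have hsp := cS_split S k n hS hk
  simp only [PS, coeff_mk]
  split_ifs with h
  · rw [if_pos h] at hsp
    rw [hsp]
    push_cast
    ring
  · rw [if_neg h] at hsp
    rw [hsp]
    simp

lemma PS_prod (S : ℕ → Prop) (T : Finset ℕ) (hT : ∀ k ∈ T, 0 < k ∧ S k) :
    PS S * ∏ k ∈ T, (1 - X ^ k) = PS (fun a => S a ∧ a ∉ T) := by
  induction T using Finset.induction generalizing S with
  | empty =>
    rw [Finset.prod_empty, mul_one]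
    exact PS_congr (by simp)
  | @insert k T' hkT ih =>
    have h1 := hT k (Finset.mem_insert_self k T')
    rw [Finset.prod_insert hkT, ← mul_assoc,
      PS_mul_one_sub S k h1.2 h1.1,
      ih (fun a => S a ∧ a ≠ k) (fun k' h' =>
        ⟨(hT k' (Finset.mem_insert_of_mem h')).1,
         (hT k' (Finset.mem_insert_of_mem h')).2,
         fun e => hkT (e ▸ h')⟩)]
    exact PS_congr (fun a => by
      simp only [Finset.mem_insert]
      tauto)

end Counting


section Euler

lemma key_euler (ℓ : ℕ) (hℓ : 2 ≤ ℓ) :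
    PS (fun a => ¬ ℓ ∣ a) * Lprod 1 = Lprod ℓ := by
  refine PowerSeries.ext fun n => ?_
  set S₀ : ℕ → Prop := fun a => ¬ ℓ ∣ a with hS₀
  have step1 : coeff (R := ℚ) n (PS S₀ * Lprod 1)
      = coeff (R := ℚ) n (PS S₀ * ∏ j ∈ range (n+1), (1 - X ^ (1*(j+1)))) := by
    refine coeff_mul_congr n _ _ _ (fun m hm => ?_)
    rw [Lprod, coeff_mk]
    exact (coeff_prod_range 1 le_rfl m (range (n+1)) (Finset.range_subset_range.2 (by omega))).symm
  set A1 := (range (n+1)).filter (fun j => ¬ ℓ ∣ (j+1)) with hA1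
  set B1 := (range (n+1)).filter (fun j => ℓ ∣ (j+1)) with hB1
  have hsplitprod : (∏ j ∈ range (n+1), (1 - (X:ℚ⟦X⟧) ^ (1*(j+1))))
      = (∏ j ∈ B1, (1 - X ^ (1*(j+1)))) * ∏ j ∈ A1, (1 - X ^ (1*(j+1))) :=
    (Finset.prod_filter_mul_prod_filter_not (range (n+1)) (fun j => ℓ ∣ (j+1)) _).symm
  set T := A1.image (· + 1) with hT
  have hprodT : (∏ j ∈ A1, (1 - (X:ℚ⟦X⟧) ^ (1*(j+1)))) = ∏ k ∈ T, (1 - X ^ k) := by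
    rw [hT, Finset.prod_image (fun a _ b _ h => by omega)]
    exact Finset.prod_congr rfl fun j _ => by rw [one_mul]
  have hPS : PS S₀ * ∏ k ∈ T, (1 - X ^ k) = PS (fun a => S₀ a ∧ a ∉ T) :=
    PS_prod S₀ T (fun k hk => by
      simp only [hT, Finset.mem_image, hA1, Finset.mem_filter, Finset.mem_range] at hk
      obtain ⟨j, ⟨hj1, hj2⟩, rfl⟩ := hk
      exact ⟨by omega, hj2⟩)
  have hone : ∀ i ≤ n, coeff (R := ℚ) i (PS (fun a => S₀ a ∧ a ∉ T)) = coeff (R := ℚ) i (1 : ℚ⟦X⟧) := by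
    intro i hi
    rw [PS, coeff_mk, coeff_one]
    rcases Nat.eq_zero_or_pos i with rfl | hpos
    · rw [cS_zero, if_pos rfl]; norm_num
    · rw [if_neg (by omega)]
      have hz : cS (fun a => S₀ a ∧ a ∉ T) i = 0 := by
        refine cS_eq_zero _ _ (fun p hall => ?_)
        have hne : p.parts ≠ 0 := by
          intro h0
          have hs := p.parts_sum
          rw [h0] at hs
          simp at hs
          omega
        obtain ⟨a, ha⟩ := Multiset.exists_mem_of_ne_zero hne
        have h1 := p.parts_pos ha
        have h2 := part_le_n p ha
        have h3 := hall a ha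
        refine h3.2 ?_
        simp only [hT, Finset.mem_image, hA1, Finset.mem_filter, Finset.mem_range]
        refine ⟨a - 1, ⟨by omega, ?_⟩, by omega⟩
        rw [show a - 1 + 1 = a by omega]
        exact h3.1
      rw [hz]; norm_num
  set B' := (range (n+1)).filter (fun t => ℓ*(t+1) ≤ n+1) with hB'
  have hBprod : (∏ j ∈ B1, (1 - (X:ℚ⟦X⟧) ^ (1*(j+1)))) = ∏ t ∈ B', (1 - X ^ (ℓ*(t+1))) := by
    refine Finset.prod_nbij' (fun j => (j+1)/ℓ - 1) (fun t => ℓ*(t+1) - 1) ?_ ?_ ?_ ?_ ?_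
    · intro j hj
      rw [hB1, Finset.mem_filter, Finset.mem_range] at hj
      obtain ⟨hj1, q, hq⟩ := hj
      have hdiv : (j+1)/ℓ = q := by rw [hq, Nat.mul_div_cancel_left _ (by omega : 0 < ℓ)]
      have hq0 : q ≠ 0 := by rintro rfl; rw [mul_zero] at hq; omega
      rw [hB', Finset.mem_filter, Finset.mem_range, hdiv,
        show q - 1 + 1 = q from by omega]
      have hle : q ≤ ℓ * q := Nat.le_mul_of_pos_left q (by omega)
      exact ⟨by omega, by omega⟩
    · intro t ht
      rw [hB', Finset.mem_filter, Finset.mem_range] at ht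
      rw [hB1, Finset.mem_filter, Finset.mem_range]
      have h1 : 1 ≤ ℓ * (t+1) := by
        have := Nat.mul_pos (show 0 < ℓ by omega) (show 0 < t + 1 by omega); omega
      rw [show ℓ*(t+1) - 1 + 1 = ℓ*(t+1) from by omega]
      exact ⟨by omega, ⟨t+1, rfl⟩⟩
    · intro j hj
      rw [hB1, Finset.mem_filter, Finset.mem_range] at hj
      obtain ⟨hj1, q, hq⟩ := hj
      have hdiv : (j+1)/ℓ = q := by rw [hq, Nat.mul_div_cancel_left _ (by omega : 0 < ℓ)]
      have hq0 : q ≠ 0 := by rintro rfl; rw [mul_zero] at hq; omega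
      rw [hdiv, show q - 1 + 1 = q from by omega]
      omega
    · intro t ht
      rw [hB', Finset.mem_filter, Finset.mem_range] at ht
      have h1 : 1 ≤ ℓ * (t+1) := by
        have := Nat.mul_pos (show 0 < ℓ by omega) (show 0 < t + 1 by omega); omega
      rw [show ℓ*(t+1) - 1 + 1 = ℓ*(t+1) from by omega,
        Nat.mul_div_cancel_left _ (show 0 < ℓ by omega)]
      omega
    · intro j hj
      rw [hB1, Finset.mem_filter, Finset.mem_range] at hj
      obtain ⟨hj1, q, hq⟩ := hj
      have hdiv : (j+1)/ℓ = q := by rw [hq, Nat.mul_div_cancel_left _ (by omega : 0 < ℓ)]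
      have hq0 : q ≠ 0 := by rintro rfl; rw [mul_zero] at hq; omega
      rw [hdiv, show q - 1 + 1 = q from by omega, ← hq, one_mul]
  have hcoeffB : coeff (R := ℚ) n (∏ t ∈ B', (1 - (X:ℚ⟦X⟧) ^ (ℓ*(t+1))))
      = coeff (R := ℚ) n (∏ t ∈ range (n+1), (1 - X ^ (ℓ*(t+1)))) := by
    have hsub : B' ⊆ range (n+1) := Finset.filter_subset _ _
    calc coeff (R := ℚ) n (∏ t ∈ B', (1 - (X:ℚ⟦X⟧) ^ (ℓ*(t+1))))
        = coeff (R := ℚ) n ((∏ t ∈ range (n+1) \ B', (1 - (X:ℚ⟦X⟧) ^ (ℓ*(t+1))))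
            * ∏ t ∈ B', (1 - X ^ (ℓ*(t+1)))) := by
          refine (coeff_mul_eq_of_one n _ _ (coeff_prod_one_sub ℓ n _ (fun j hj => ?_))).symm
          have h1 := (Finset.mem_sdiff.1 hj).2
          have h2 := Finset.mem_range.1 ((Finset.mem_sdiff.1 hj).1)
          rw [hB', Finset.mem_filter, Finset.mem_range] at h1
          omega
      _ = coeff (R := ℚ) n (∏ t ∈ range (n+1), (1 - X ^ (ℓ*(t+1)))) := by
          rw [Finset.prod_sdiff hsub]
  have hre : PS S₀ * ((∏ j ∈ B1, (1 - (X:ℚ⟦X⟧) ^ (1*(j+1)))) * ∏ k ∈ T, (1 - X ^ k))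
      = (PS S₀ * ∏ k ∈ T, (1 - X ^ k)) * ∏ j ∈ B1, (1 - X ^ (1*(j+1))) := by ring
  rw [step1, hsplitprod, hprodT, hre, hPS,
    coeff_mul_eq_of_one n _ _ hone, hBprod, hcoeffB, Lprod, coeff_mk]

end Euler

section GPart

noncomputable def Em (m : ℕ) : ℚ⟦X⟧ :=
  PowerSeries.mk fun n => if m ∣ n ∧ n ≠ 0 then 1 else 0

lemma Em_mul (m : ℕ) (hm : 1 ≤ m) : Em m * (1 - X ^ m) = X ^ m := by
  refine PowerSeries.ext fun n => ?_
  rw [mul_sub, mul_one, map_sub, PowerSeries.coeff_mul_X_pow']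
  simp only [Em, coeff_mk, coeff_X_pow]
  by_cases h1 : m ≤ n
  · rw [if_pos h1]
    by_cases h2 : m ∣ n
    · have h3 : m ∣ (n - m) := Nat.dvd_sub h2 dvd_rfl
      rw [if_pos ⟨h2, by omega⟩]
      by_cases h5 : n = m
      · rw [if_pos h5, if_neg (fun hh => hh.2 (by omega))]
        norm_num
      · have h7 : m < n := by
          rcases h2 with ⟨c, rfl⟩
          rcases Nat.lt_or_ge 1 c with h | h
          · nlinarith
          · interval_cases c <;> omega
        rw [if_pos ⟨h3, by omega⟩, if_neg h5]
        norm_num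
    · have h3 : ¬ m ∣ (n - m) := by
        intro hdd
        have h4 : n - m + m = n := by omega
        exact h2 (h4 ▸ Nat.dvd_add hdd dvd_rfl)
      rw [if_neg (fun hh => h2 hh.1), if_neg (fun hh => h3 hh.1),
        if_neg (fun e : n = m => h2 (by rw [e]))]
      norm_num
  · rw [if_neg h1,
      if_neg (fun hh : m ∣ n ∧ n ≠ 0 => h1 (Nat.le_of_dvd (by omega) hh.1)),
      if_neg (by omega : ¬ n = m)]
    norm_num

lemma Em_eq (m : ℕ) (hm : 1 ≤ m) : (X:ℚ⟦X⟧)^m * (1 - X^m)⁻¹ = Em m := by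
  have hc : constantCoeff (R := ℚ) (1 - (X:ℚ⟦X⟧)^m) ≠ 0 := by
    rw [map_sub, map_one, map_pow, constantCoeff_X, zero_pow (by omega : m ≠ 0)]
    norm_num
  calc (X:ℚ⟦X⟧)^m * (1-X^m)⁻¹ = (Em m * (1 - X^m)) * (1-X^m)⁻¹ := by rw [Em_mul m hm]
  _ = Em m * ((1 - X^m) * (1-X^m)⁻¹) := by ring
  _ = Em m := by rw [PowerSeries.mul_inv_cancel _ hc, mul_one]

lemma coeff_G (ℓ k : ℕ) (hℓ : 2 ≤ ℓ) :
    coeff (R := ℚ) k (Em 1 - Em ℓ) = if ¬ ℓ ∣ k ∧ k ≠ 0 then 1 else 0 := by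
  rw [map_sub]
  simp only [Em, coeff_mk]
  by_cases h0 : k = 0
  · subst h0
    norm_num
  by_cases hd : ℓ ∣ k
  · rw [if_pos ⟨one_dvd k, h0⟩, if_pos ⟨hd, h0⟩, if_neg (by tauto)]
    norm_num
  · rw [if_pos ⟨one_dvd k, h0⟩, if_neg (fun hh => hd hh.1), if_pos ⟨hd, h0⟩]
    norm_num

end GPart

lemma bCount_eq_sum (ℓ n : ℕ) (hℓ : 2 ≤ ℓ) :
    bCount ℓ 1 n
      = ∑ k ∈ range (n+1), (if ¬ ℓ ∣ k ∧ k ≠ 0 then cS (fun a => ¬ ℓ ∣ a) (n-k) else 0) := by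
  rw [bCount]
  have h1 : ∀ p ∈ Finset.univ.filter (fun p : Nat.Partition n => ∀ a ∈ p.parts, ¬ ℓ ∣ a),
      hookCount p 1 = ∑ k ∈ range (n+1), (if k ∈ p.parts then 1 else 0) := by
    intro p _
    rw [hookCount_one, ← Finset.card_filter]
    congr 1
    ext k
    simp only [Finset.mem_filter, Finset.mem_range, Multiset.mem_toFinset]
    exact ⟨fun h => ⟨by have := part_le_n p h; omega, h⟩, fun h => h.2⟩
  rw [Finset.sum_congr rfl h1, Finset.sum_comm]
  refine Finset.sum_congr rfl fun k hk => ?_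
  rw [← Finset.card_filter]
  have hcard : ((Finset.univ.filter
        (fun p : Nat.Partition n => ∀ a ∈ p.parts, ¬ ℓ ∣ a)).filter
          (fun p => k ∈ p.parts)).card = cSk (fun a => ¬ ℓ ∣ a) k n := by
    refine congrArg Finset.card ?_
    ext p
    simp [Finset.mem_filter, cSk]
  rw [hcard]
  rw [Finset.mem_range] at hk
  by_cases h0 : k = 0
  · subst h0
    rw [cSk_zero_of_zero, if_neg (by tauto)]
  by_cases hd : ℓ ∣ k
  · rw [cSk_zero_of_not _ _ _ (by simpa using hd), if_neg (by tauto)]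
  · rw [cSk_eq _ _ _ hd (by omega) (by omega), if_pos ⟨hd, h0⟩]

theorem bCount_one_generating_function (ℓ : ℕ) (hℓ : 2 ≤ ℓ) :
    (PowerSeries.mk fun n => (bCount ℓ 1 n : ℚ)) =
      (∏' j : ℕ, (1 - (X : ℚ⟦X⟧) ^ (ℓ * (j + 1)))) *
        (∏' j : ℕ, (1 - (X : ℚ⟦X⟧) ^ (j + 1)))⁻¹ *
        (X * (1 - (X : ℚ⟦X⟧))⁻¹ - X ^ ℓ * (1 - (X : ℚ⟦X⟧) ^ ℓ)⁻¹) := by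
  have h1 : (∏' j : ℕ, (1 - (X : ℚ⟦X⟧) ^ (j + 1))) = Lprod 1 := by
    rw [show (∏' j : ℕ, (1 - (X : ℚ⟦X⟧) ^ (j + 1)))
        = ∏' j : ℕ, (1 - (X : ℚ⟦X⟧) ^ (1*(j + 1))) by simp only [one_mul]]
    exact tprod_eq_Lprod 1 le_rfl
  have h2 : (∏' j : ℕ, (1 - (X : ℚ⟦X⟧) ^ (ℓ * (j + 1)))) = Lprod ℓ :=
    tprod_eq_Lprod ℓ (by omega)
  have hC : constantCoeff (R := ℚ) (Lprod 1) ≠ 0 := by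
    rw [constantCoeff_Lprod 1 le_rfl]; norm_num
  have h3 : Lprod ℓ * (Lprod 1)⁻¹ = PS (fun a => ¬ ℓ ∣ a) := by
    rw [← key_euler ℓ hℓ, mul_assoc, PowerSeries.mul_inv_cancel _ hC, mul_one]
  have h4 : (X : ℚ⟦X⟧) * (1 - (X : ℚ⟦X⟧))⁻¹ = Em 1 := by
    have := Em_eq 1 le_rfl
    rwa [pow_one] at this
  have h5 : (X : ℚ⟦X⟧) ^ ℓ * (1 - (X : ℚ⟦X⟧) ^ ℓ)⁻¹ = Em ℓ := Em_eq ℓ (by omega)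
  rw [h1, h2, h3, h4, h5]
  refine PowerSeries.ext fun n => ?_
  rw [coeff_mk, mul_comm, coeff_mul, Finset.Nat.sum_antidiagonal_eq_sum_range_succ_mk,
    bCount_eq_sum ℓ n hℓ]
  push_cast
  refine Finset.sum_congr rfl fun k hk => ?_
  rw [coeff_G ℓ k hℓ]
  rw [PS, coeff_mk]
  split_ifs with h
  · rw [one_mul]
  · rw [zero_mul]
end

section
/- For every integer ℓ ≥ 2 and every n ≥ 0, the number of ℓ-regular partitions of n equals the number of ℓ-distinct partitions of n. -/
namespace GlaisherAux

open Finset Multiset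

/-- Base-`ℓ` digits reconstruct the number. -/
lemma sum_digits {ℓ : ℕ} (hℓ : 2 ≤ ℓ) (N : ℕ) :
    ∀ c : ℕ, c < ℓ ^ N → ∑ k ∈ Finset.range N, (c / ℓ ^ k % ℓ) * ℓ ^ k = c := by
  have hℓ0 : 0 < ℓ := by omega
  induction N with
  | zero => intro c hc; simpa using (Nat.lt_one_iff.mp hc).symm
  | succ N ih =>
    intro c hc
    rw [Finset.sum_range_succ']
    have h1 : ∀ k, c / ℓ ^ (k + 1) = (c / ℓ) / ℓ ^ k := by
      intro k
      rw [pow_succ', Nat.div_div_eq_div_mul]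
    have h2 : ∑ k ∈ Finset.range N, (c / ℓ ^ (k + 1) % ℓ) * ℓ ^ (k + 1) =
        ℓ * ∑ k ∈ Finset.range N, ((c / ℓ) / ℓ ^ k % ℓ) * ℓ ^ k := by
      rw [Finset.mul_sum]
      refine Finset.sum_congr rfl fun k _ => ?_
      rw [h1, pow_succ]
      ring
    have hcl : c / ℓ < ℓ ^ N := by
      rw [Nat.div_lt_iff_lt_mul hℓ0]
      calc c < ℓ ^ (N + 1) := hc
        _ = ℓ ^ N * ℓ := by rw [pow_succ]
    rw [h2, ih _ hcl]
    simp only [pow_zero, Nat.div_one, mul_one]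
    rw [add_comm]
    exact Nat.mod_add_div c ℓ

lemma sum_split {ℓ : ℕ} (f : ℕ → ℕ) (M : ℕ) :
    ∑ j ∈ Finset.range (M + 1), f j * ℓ ^ j
      = f 0 + ℓ * ∑ j ∈ Finset.range M, f (j + 1) * ℓ ^ j := by
  rw [Finset.sum_range_succ', Finset.mul_sum]
  simp only [pow_zero, mul_one, pow_succ]
  rw [add_comm]
  congr 1
  refine Finset.sum_congr rfl fun j _ => by ring

/-- Extracting a digit from a number given by its digits. -/
lemma digit_sum {ℓ : ℕ} (hℓ : 2 ≤ ℓ) (k : ℕ) :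
    ∀ (f : ℕ → ℕ) (N : ℕ), (∀ j, f j < ℓ) → (∀ j, N ≤ j → f j = 0) →
      (∑ j ∈ Finset.range N, f j * ℓ ^ j) / ℓ ^ k % ℓ = f k := by
  have hℓ0 : 0 < ℓ := by omega
  induction k with
  | zero =>
    intro f N hf hN
    match N with
    | 0 => simpa using (hN 0 le_rfl).symm
    | M + 1 =>
      rw [sum_split]
      simp [Nat.add_mul_mod_self_left, Nat.mod_eq_of_lt (hf 0)]
  | succ k ih =>
    intro f N hf hN
    match N with
    | 0 => rw [Finset.sum_range_zero]; simp [hN (k+1) (Nat.zero_le _)]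
    | M + 1 =>
      have hdiv : (∑ j ∈ Finset.range (M+1), f j * ℓ ^ j) / ℓ
          = ∑ j ∈ Finset.range M, f (j+1) * ℓ ^ j := by
        rw [sum_split, Nat.add_mul_div_left _ _ hℓ0, Nat.div_eq_of_lt (hf 0), zero_add]
      rw [pow_succ', ← Nat.div_div_eq_div_mul, hdiv]
      exact ih (fun j => f (j+1)) M (fun j => hf _) (fun j hj => hN _ (by omega))

lemma maxPowDiv_mul_pow {ℓ m : ℕ} (hℓ : 2 ≤ ℓ) (hm : ¬ ℓ ∣ m) (k : ℕ) :
    ℓ.maxPowDiv (m * ℓ ^ k) = k := by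
  have hm0 : 0 < m := by
    rcases Nat.eq_zero_or_pos m with h | h
    · exact absurd (h ▸ dvd_zero ℓ) hm
    · exact h
  have h1 : ℓ.maxPowDiv m = 0 := by
    by_contra h
    have h2 : ℓ ∣ m := by
      refine dvd_trans ?_ ((Nat.maxPowDiv.pow_dvd (p := ℓ) (n := m)))
      exact dvd_pow_self ℓ (by exact h)
    exact hm h2
  rw [mul_comm]
  change padicValNat ℓ m = 0 at h1
  show padicValNat ℓ (ℓ ^ k * m) = k
  rw [Nat.maxPowDiv.base_pow_mul (by omega) hm0.ne', h1]
  exact Nat.zero_add k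

lemma decomp_unique {ℓ m k m' k' : ℕ} (hℓ : 2 ≤ ℓ) (hm : ¬ ℓ ∣ m) (hm' : ¬ ℓ ∣ m')
    (h : m * ℓ ^ k = m' * ℓ ^ k') : m = m' ∧ k = k' := by
  have hk : k = k' := by
    have := maxPowDiv_mul_pow hℓ hm k
    rw [h, maxPowDiv_mul_pow hℓ hm' k'] at this
    omega
  subst hk
  have hpos : 0 < ℓ ^ k := Nat.pow_pos (by omega)
  exact ⟨Nat.eq_of_mul_eq_mul_right hpos h, rfl⟩

lemma not_dvd_div {ℓ b : ℕ} (hℓ : 2 ≤ ℓ) (hb : 0 < b) :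
    ¬ ℓ ∣ b / ℓ ^ ℓ.maxPowDiv b := by
  intro h
  have hd : ℓ ^ ℓ.maxPowDiv b ∣ b := (Nat.maxPowDiv.pow_dvd (p := ℓ) (n := b))
  have h2 : ℓ ^ (ℓ.maxPowDiv b + 1) ∣ b := by
    obtain ⟨c, hc⟩ := h
    refine ⟨c, ?_⟩
    rw [pow_succ]
    calc b = ℓ ^ ℓ.maxPowDiv b * (b / ℓ ^ ℓ.maxPowDiv b) := (Nat.mul_div_cancel' hd).symm
      _ = ℓ ^ ℓ.maxPowDiv b * (ℓ * c) := by rw [hc]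
      _ = ℓ ^ ℓ.maxPowDiv b * ℓ * c := by ring
  have : ℓ.maxPowDiv b + 1 ≤ ℓ.maxPowDiv b := (Nat.pow_dvd_iff_le_padicValNat (show ℓ ≠ 1 by omega) hb.ne').mp h2
  omega

lemma div_mul_pow_eq {ℓ b : ℕ} (hb : 0 < b) :
    b / ℓ ^ ℓ.maxPowDiv b * ℓ ^ ℓ.maxPowDiv b = b :=
  Nat.div_mul_cancel ((Nat.maxPowDiv.pow_dvd (p := ℓ) (n := b)))

lemma maxPowDiv_le {ℓ b n : ℕ} (hℓ : 2 ≤ ℓ) (hb : 0 < b) (hbn : b ≤ n) :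
    ℓ.maxPowDiv b ≤ n := by
  have h1 : ℓ ^ ℓ.maxPowDiv b ≤ b := Nat.le_of_dvd hb ((Nat.maxPowDiv.pow_dvd (p := ℓ) (n := b)))
  have h2 : ℓ.maxPowDiv b < ℓ ^ ℓ.maxPowDiv b := Nat.lt_pow_self (by omega)
  omega

lemma count_lt_pow {ℓ n : ℕ} (hℓ : 2 ≤ ℓ) (p : Nat.Partition n) (m : ℕ) :
    p.parts.count m < ℓ ^ (n + 1) := by
  have h1 : p.parts.count m ≤ Multiset.card p.parts := Multiset.count_le_card _ _
  have h2 : Multiset.card p.parts ≤ p.parts.sum := by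
    have := Multiset.card_nsmul_le_sum (s := p.parts) (a := 1)
      (fun x hx => p.parts_pos hx)
    simpa using this
  have h3 : n < 2 ^ (n + 1) := by
    have := Nat.lt_two_pow_self (n := n)
    have : (2:ℕ) ^ n ≤ 2 ^ (n+1) := Nat.pow_le_pow_right (by omega) (by omega)
    omega
  have h4 : (2:ℕ) ^ (n+1) ≤ ℓ ^ (n+1) := Nat.pow_le_pow_left (by omega) _
  have h5 := p.parts_sum
  omega

lemma part_le {n : ℕ} (p : Nat.Partition n) {b : ℕ} (hb : b ∈ p.parts) : b ≤ n := by
  have h1 := Multiset.single_le_sum (fun a ha => Nat.zero_le a) _ hb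
  have h2 := p.parts_sum
  omega

lemma count_eq_zero_of_gt {n : ℕ} (p : Nat.Partition n) {b : ℕ} (hb : n < b) :
    p.parts.count b = 0 :=
  Multiset.count_eq_zero_of_notMem fun h => absurd (part_le p h) (by omega)

/-- The map from `ℓ`-distinct partitions to `ℓ`-regular partitions: replace each part
`a = m * ℓ ^ k` (with `ℓ ∤ m`) by `ℓ ^ k` copies of `m`. -/
def phi (ℓ : ℕ) (hℓ : 2 ≤ ℓ) {n : ℕ} (p : Nat.Partition n) : Nat.Partition n where
  parts := p.parts.bind fun a =>
    Multiset.replicate (ℓ ^ ℓ.maxPowDiv a) (a / ℓ ^ ℓ.maxPowDiv a)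
  parts_pos := by
    intro i hi
    rw [Multiset.mem_bind] at hi
    obtain ⟨a, ha, hia⟩ := hi
    rw [Multiset.mem_replicate] at hia
    have ha0 : 0 < a := p.parts_pos ha
    have hd : ℓ ^ ℓ.maxPowDiv a ∣ a := (Nat.maxPowDiv.pow_dvd (p := ℓ) (n := a))
    rw [hia.2]
    exact Nat.div_pos (Nat.le_of_dvd ha0 hd) (Nat.pow_pos (by omega))
  parts_sum := by
    rw [Multiset.sum_bind]
    have : ∀ a ∈ p.parts,
        (Multiset.replicate (ℓ ^ ℓ.maxPowDiv a) (a / ℓ ^ ℓ.maxPowDiv a)).sum = a := by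
      intro a ha
      rw [Multiset.sum_replicate, smul_eq_mul]
      exact Nat.mul_div_cancel' ((Nat.maxPowDiv.pow_dvd (p := ℓ) (n := a)))
    rw [Multiset.map_congr rfl this, Multiset.map_id', p.parts_sum]

/-- The map from `ℓ`-regular partitions to `ℓ`-distinct partitions: replace `c` copies of a
part `m` by, for each base-`ℓ` digit `c_k` of `c`, `c_k` copies of `m * ℓ ^ k`. -/
def psi (ℓ : ℕ) (hℓ : 2 ≤ ℓ) {n : ℕ} (q : Nat.Partition n) : Nat.Partition n where
  parts := ∑ m ∈ q.parts.toFinset, ∑ k ∈ Finset.range (n + 1),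
      Multiset.replicate (q.parts.count m / ℓ ^ k % ℓ) (m * ℓ ^ k)
  parts_pos := by
    intro i hi
    rw [Multiset.mem_sum] at hi
    obtain ⟨m, hm, hi⟩ := hi
    rw [Multiset.mem_sum] at hi
    obtain ⟨k, hk, hi⟩ := hi
    rw [Multiset.mem_replicate] at hi
    rw [hi.2]
    exact Nat.mul_pos (q.parts_pos (Multiset.mem_toFinset.mp hm))
      (Nat.pow_pos (by omega))
  parts_sum := by
    have hsum : ∀ (s : Finset ℕ) (f : ℕ → Multiset ℕ),
        (∑ i ∈ s, f i).sum = ∑ i ∈ s, (f i).sum := fun s f =>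
      map_sum Multiset.sumAddMonoidHom f s
    rw [hsum]
    have : ∀ m ∈ q.parts.toFinset,
        (∑ k ∈ Finset.range (n + 1),
          Multiset.replicate (q.parts.count m / ℓ ^ k % ℓ) (m * ℓ ^ k)).sum
        = q.parts.count m * m := by
      intro m hm
      rw [hsum]
      have : ∀ k ∈ Finset.range (n + 1),
          (Multiset.replicate (q.parts.count m / ℓ ^ k % ℓ) (m * ℓ ^ k)).sum
          = (q.parts.count m / ℓ ^ k % ℓ) * ℓ ^ k * m := by
        intro k _
        rw [Multiset.sum_replicate, smul_eq_mul]; ring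
      rw [Finset.sum_congr rfl this, ← Finset.sum_mul,
        sum_digits hℓ (n + 1) _ (count_lt_pow hℓ q m)]
    rw [Finset.sum_congr rfl this]
    have h := congrArg Multiset.sum (Multiset.toFinset_sum_count_nsmul_eq q.parts)
    rw [hsum] at h
    simp only [Multiset.nsmul_singleton, Multiset.sum_replicate, smul_eq_mul] at h
    rw [h, q.parts_sum]

lemma phi_regular {ℓ : ℕ} (hℓ : 2 ≤ ℓ) {n : ℕ} (p : Nat.Partition n) :
    ∀ b ∈ (phi ℓ hℓ p).parts, ¬ ℓ ∣ b := by
  intro b hb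
  rw [phi, Multiset.mem_bind] at hb
  obtain ⟨a, ha, hba⟩ := hb
  rw [Multiset.mem_replicate] at hba
  rw [hba.2]
  exact not_dvd_div hℓ (p.parts_pos ha)

lemma count_phi {ℓ : ℕ} (hℓ : 2 ≤ ℓ) {n : ℕ} (p : Nat.Partition n) {b : ℕ}
    (hb : 0 < b) (hbd : ¬ ℓ ∣ b) :
    (phi ℓ hℓ p).parts.count b
      = ∑ k ∈ Finset.range (n + 1), p.parts.count (b * ℓ ^ k) * ℓ ^ k := by
  rw [phi]
  dsimp only
  rw [Multiset.count_bind, Finset.sum_multiset_map_count]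
  have key : ∀ a ∈ p.parts.toFinset,
      p.parts.count a •
        (Multiset.replicate (ℓ ^ ℓ.maxPowDiv a) (a / ℓ ^ ℓ.maxPowDiv a)).count b
      = ∑ k ∈ Finset.range (n + 1),
          (if b * ℓ ^ k = a then p.parts.count a * ℓ ^ k else 0) := by
    intro a hamem
    have ha : a ∈ p.parts := Multiset.mem_toFinset.mp hamem
    have ha0 : 0 < a := p.parts_pos ha
    rw [Multiset.count_replicate, smul_eq_mul]
    by_cases hab : a / ℓ ^ ℓ.maxPowDiv a = b
    · rw [if_pos hab]
      have hdk : b * ℓ ^ ℓ.maxPowDiv a = a := by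
        rw [← hab]; exact div_mul_pow_eq ha0
      have hkn : ℓ.maxPowDiv a ∈ Finset.range (n + 1) := by
        rw [Finset.mem_range]
        have := maxPowDiv_le hℓ ha0 (part_le p ha)
        omega
      rw [Finset.sum_eq_single (ℓ.maxPowDiv a)]
      · rw [if_pos hdk]
      · intro k _ hk
        rw [if_neg]
        intro hcon
        exact hk (decomp_unique hℓ hbd hbd (hcon.trans hdk.symm)).2
      · intro hcon; exact absurd hkn hcon
    · rw [if_neg hab]
      rw [Finset.sum_eq_zero]
      · ring
      · intro k _
        rw [if_neg]
        intro hcon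
        have hvk : ℓ.maxPowDiv a = k := by rw [← hcon]; exact maxPowDiv_mul_pow hℓ hbd k
        apply hab
        rw [hvk, ← hcon, Nat.mul_div_cancel _ (Nat.pow_pos (by omega))]
  rw [Finset.sum_congr rfl key, Finset.sum_comm]
  refine Finset.sum_congr rfl fun k _ => ?_
  rw [Finset.sum_ite_eq p.parts.toFinset (b * ℓ ^ k) (fun a => p.parts.count a * ℓ ^ k)]
  by_cases h : b * ℓ ^ k ∈ p.parts.toFinset
  · rw [if_pos h]
  · rw [if_neg h, Multiset.count_eq_zero_of_notMem (fun hc => h (Multiset.mem_toFinset.mpr hc)),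
      zero_mul]

lemma count_psi {ℓ : ℕ} (hℓ : 2 ≤ ℓ) {n : ℕ} (q : Nat.Partition n)
    (hreg : ∀ a ∈ q.parts, ¬ ℓ ∣ a) {m k : ℕ} (hm : ¬ ℓ ∣ m) (hk : k ≤ n) :
    (psi ℓ hℓ q).parts.count (m * ℓ ^ k) = q.parts.count m / ℓ ^ k % ℓ := by
  rw [psi]
  dsimp only
  rw [Multiset.count_sum']
  rw [Finset.sum_eq_single m]
  · rw [Multiset.count_sum']
    rw [Finset.sum_eq_single k]
    · rw [Multiset.count_replicate_self]
    · intro k' _ hk'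
      rw [Multiset.count_replicate, if_neg]
      intro hcon
      exact hk' (decomp_unique hℓ hm hm hcon).2
    · intro hcon
      exact absurd (Finset.mem_range.mpr (by omega)) hcon
  · intro m' hm' hmm'
    rw [Multiset.count_sum', Finset.sum_eq_zero]
    intro k' _
    rw [Multiset.count_replicate, if_neg]
    intro hcon
    exact hmm' (decomp_unique hℓ (hreg m' (Multiset.mem_toFinset.mp hm')) hm hcon).1
  · intro hcon
    have hc0 : q.parts.count m = 0 :=
      Multiset.count_eq_zero_of_notMem fun h => hcon (Multiset.mem_toFinset.mpr h)
    simp [hc0]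

lemma psi_distinct {ℓ : ℕ} (hℓ : 2 ≤ ℓ) {n : ℕ} (q : Nat.Partition n)
    (hreg : ∀ a ∈ q.parts, ¬ ℓ ∣ a) :
    ∀ b ∈ (psi ℓ hℓ q).parts, (psi ℓ hℓ q).parts.count b < ℓ := by
  intro b hb
  have hb' := hb
  rw [psi, Multiset.mem_sum] at hb'
  obtain ⟨m, hm, hb'⟩ := hb'
  rw [Multiset.mem_sum] at hb'
  obtain ⟨k, hk, hb'⟩ := hb'
  rw [Multiset.mem_replicate] at hb'
  rw [hb'.2, count_psi hℓ q hreg (hreg m (Multiset.mem_toFinset.mp hm))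
    (by have := Finset.mem_range.mp hk; omega)]
  exact Nat.mod_lt _ (by omega)

lemma phi_psi {ℓ : ℕ} (hℓ : 2 ≤ ℓ) {n : ℕ} (q : Nat.Partition n)
    (hreg : ∀ a ∈ q.parts, ¬ ℓ ∣ a) : phi ℓ hℓ (psi ℓ hℓ q) = q := by
  ext1
  ext b
  rcases Nat.eq_zero_or_pos b with hb0 | hb0
  · subst hb0
    rw [Multiset.count_eq_zero_of_notMem (fun h => absurd ((phi ℓ hℓ (psi ℓ hℓ q)).parts_pos h) (by omega)),
      Multiset.count_eq_zero_of_notMem (fun h => absurd (q.parts_pos h) (by omega))]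
  rcases le_or_gt b n with hbn | hbn
  · by_cases hbd : ℓ ∣ b
    · rw [Multiset.count_eq_zero_of_notMem (fun h => phi_regular hℓ _ b h hbd),
        Multiset.count_eq_zero_of_notMem (fun h => hreg b h hbd)]
    · rw [count_phi hℓ _ hb0 hbd]
      have : ∀ k ∈ Finset.range (n + 1),
          (psi ℓ hℓ q).parts.count (b * ℓ ^ k) * ℓ ^ k
          = (q.parts.count b / ℓ ^ k % ℓ) * ℓ ^ k := by
        intro k hk
        rw [count_psi hℓ q hreg hbd (by have := Finset.mem_range.mp hk; omega)]
      rw [Finset.sum_congr rfl this, sum_digits hℓ (n + 1) _ (count_lt_pow hℓ q b)]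
  · rw [count_eq_zero_of_gt _ hbn, count_eq_zero_of_gt _ hbn]

lemma psi_phi {ℓ : ℕ} (hℓ : 2 ≤ ℓ) {n : ℕ} (p : Nat.Partition n)
    (hdist : ∀ a ∈ p.parts, p.parts.count a < ℓ) : psi ℓ hℓ (phi ℓ hℓ p) = p := by
  ext1
  ext b
  rcases Nat.eq_zero_or_pos b with hb0 | hb0
  · subst hb0
    rw [Multiset.count_eq_zero_of_notMem (fun h => absurd ((psi ℓ hℓ (phi ℓ hℓ p)).parts_pos h) (by omega)),
      Multiset.count_eq_zero_of_notMem (fun h => absurd (p.parts_pos h) (by omega))]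
  rcases le_or_gt b n with hbn | hbn
  · set v := ℓ.maxPowDiv b with hv
    set m := b / ℓ ^ v with hm
    have hmv : m * ℓ ^ v = b := div_mul_pow_eq hb0
    have hmd : ¬ ℓ ∣ m := not_dvd_div hℓ hb0
    have hvn : v ≤ n := maxPowDiv_le hℓ hb0 hbn
    have h1 : (psi ℓ hℓ (phi ℓ hℓ p)).parts.count b
        = (phi ℓ hℓ p).parts.count m / ℓ ^ v % ℓ := by
      rw [← hmv]
      exact count_psi hℓ _ (phi_regular hℓ p) hmd hvn
    have hm0 : 0 < m := by
      rcases Nat.eq_zero_or_pos m with h | h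
      · exact absurd (h ▸ dvd_zero ℓ) hmd
      · exact h
    have hf : ∀ j, p.parts.count (m * ℓ ^ j) < ℓ := by
      intro j
      by_cases h : m * ℓ ^ j ∈ p.parts
      · exact hdist _ h
      · rw [Multiset.count_eq_zero_of_notMem h]; omega
    have hz : ∀ j, n + 1 ≤ j → p.parts.count (m * ℓ ^ j) = 0 := by
      intro j hj
      apply count_eq_zero_of_gt
      have h2 : (2:ℕ) ^ j ≤ ℓ ^ j := Nat.pow_le_pow_left (by omega) _
      have h3 : j < 2 ^ j := Nat.lt_two_pow_self (n := j)
      have h4 : ℓ ^ j ≤ m * ℓ ^ j := Nat.le_mul_of_pos_left _ hm0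
      omega
    have hdig := digit_sum hℓ v (fun k => p.parts.count (m * ℓ ^ k)) (n + 1) hf hz
    rw [h1, count_phi hℓ p hm0 hmd, hdig, hmv]
  · rw [count_eq_zero_of_gt _ hbn, count_eq_zero_of_gt _ hbn]

end GlaisherAux

theorem glaisher (ℓ : ℕ) (hℓ : 2 ≤ ℓ) (n : ℕ) :
    (Finset.univ.filter (fun p : Nat.Partition n => ∀ a ∈ p.parts, ¬ ℓ ∣ a)).card =
      (Finset.univ.filter
        (fun p : Nat.Partition n => ∀ a ∈ p.parts, p.parts.count a < ℓ)).card := by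
  refine Finset.card_bij' (fun q _ => GlaisherAux.psi ℓ hℓ q)
    (fun p _ => GlaisherAux.phi ℓ hℓ p) ?_ ?_ ?_ ?_
  · intro q hq
    rw [Finset.mem_filter] at hq ⊢
    exact ⟨Finset.mem_univ _, GlaisherAux.psi_distinct hℓ q hq.2⟩
  · intro p hp
    rw [Finset.mem_filter] at hp ⊢
    exact ⟨Finset.mem_univ _, GlaisherAux.phi_regular hℓ p⟩
  · intro q hq
    rw [Finset.mem_filter] at hq
    exact GlaisherAux.phi_psi hℓ q hq.2
  · intro p hp
    rw [Finset.mem_filter] at hp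
    exact GlaisherAux.psi_phi hℓ p hp.2
end

section
/- The function g₂(x) := 3/2 - γ - ψ(x+1) - 2x(ψ(2x) - ψ(x)) is strictly decreasing on the interval (0,1), where ψ is the digamma function and γ is the Euler–Mascheroni constant. -/
/-- The digamma function `ψ(x) = Γ'(x)/Γ(x)`. -/
noncomputable def digamma (x : ℝ) : ℝ := deriv Real.Gamma x / Real.Gamma x

/-- `g₂(x) = 3/2 - γ - ψ(x+1) - 2x(ψ(2x) - ψ(x))`. -/
noncomputable def g2 (x : ℝ) : ℝ :=
  3 / 2 - Real.eulerMascheroniConstant - digamma (x + 1)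
    - 2 * x * (digamma (2 * x) - digamma x)

/-- `g₃(x) = 2 - γ - ψ(x+1) + (x/2)(5-3x)ψ(x) - x(1-6x)ψ(2x) - (3x/2)(1+3x)ψ(3x)`. -/
noncomputable def g3 (x : ℝ) : ℝ :=
  2 - Real.eulerMascheroniConstant - digamma (x + 1)
    + x / 2 * (5 - 3 * x) * digamma x
    - x * (1 - 6 * x) * digamma (2 * x)
    - 3 * x / 2 * (1 + 3 * x) * digamma (3 * x)

/-- `β₁(ℓ) = (1/ℓ)(-γ - ψ(1/ℓ))`. -/
noncomputable def beta1 (l : ℝ) : ℝ :=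
  1 / l * (-Real.eulerMascheroniConstant - digamma (1 / l))

/-- `β₂(ℓ) = (1/ℓ)[1 - γ - (1 - 2/ℓ)ψ(1/ℓ) - (2/ℓ)ψ(2/ℓ)]`. -/
noncomputable def beta2 (l : ℝ) : ℝ :=
  1 / l * (1 - Real.eulerMascheroniConstant - (1 - 2 / l) * digamma (1 / l)
    - 2 / l * digamma (2 / l))

/-- `β₃(ℓ) = (1/ℓ)[3/2 - γ - (1 - 3/(2ℓ))(1 - 1/ℓ)ψ(1/ℓ) - (1/ℓ)(1 - 6/ℓ)ψ(2/ℓ)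
  - (3/(2ℓ))(1 + 3/ℓ)ψ(3/ℓ)]`. -/
noncomputable def beta3 (l : ℝ) : ℝ :=
  1 / l * (3 / 2 - Real.eulerMascheroniConstant
    - (1 - 3 / (2 * l)) * (1 - 1 / l) * digamma (1 / l)
    - 1 / l * (1 - 6 / l) * digamma (2 / l)
    - 3 / (2 * l) * (1 + 3 / l) * digamma (3 / l))


open Real Filter Topology Set Nat

local notation "γ" => Real.eulerMascheroniConstant

/-- Basic summable bound: `∑ 1/(k+1)^2` converges. -/
lemma summable_inv_sq : Summable (fun k : ℕ => 1 / ((k : ℝ) + 1) ^ 2) := by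
  have h : Summable (fun n : ℕ => 1 / (n : ℝ) ^ 2) :=
    Real.summable_one_div_nat_pow.mpr one_lt_two
  have := (summable_nat_add_iff 1).mpr h
  simpa using this

/-- `y + k ≥ min y 1 * (k+1)` for `y > 0`. -/
lemma aux_lb {y : ℝ} (hy : 0 < y) (k : ℕ) : min y 1 * ((k : ℝ) + 1) ≤ y + k := by
  rcases le_total y 1 with h | h
  · rw [min_eq_left h]
    nlinarith [k.cast_nonneg (α := ℝ)]
  · rw [min_eq_right h]
    nlinarith [k.cast_nonneg (α := ℝ)]

lemma term_bound {y : ℝ} (hy : 0 < y) {c : ℝ} (hc : |y - 1| ≤ c) (k : ℕ) :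
    |1 / ((k : ℝ) + 1) - 1 / (y + k)| ≤ c / min y 1 * (1 / ((k : ℝ) + 1) ^ 2) := by
  have hk1 : (0:ℝ) < (k : ℝ) + 1 := by positivity
  have hyk : (0:ℝ) < y + k := by positivity
  have hmin : (0:ℝ) < min y 1 := lt_min hy one_pos
  have heq : 1 / ((k : ℝ) + 1) - 1 / (y + k) = (y - 1) / (((k : ℝ) + 1) * (y + k)) := by
    field_simp; ring
  rw [heq, abs_div, abs_of_pos (by positivity : (0:ℝ) < ((k : ℝ) + 1) * (y + k))]
  rw [div_le_iff₀ (by positivity)]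
  have h1 : min y 1 * ((k : ℝ) + 1) ≤ y + k := aux_lb hy k
  have hcnn : 0 ≤ c := le_trans (abs_nonneg _) hc
  calc |y - 1| ≤ c := hc
    _ = (c / min y 1 * (1 / ((k : ℝ) + 1) ^ 2)) * (((k:ℝ)+1) * (min y 1 * ((k : ℝ) + 1))) := by
        field_simp
    _ ≤ (c / min y 1 * (1 / ((k : ℝ) + 1) ^ 2)) * (((k:ℝ)+1) * (y + k)) := by
        apply mul_le_mul_of_nonneg_left _ (by positivity)
        exact mul_le_mul_of_nonneg_left h1 (by positivity)

lemma summable_term {y : ℝ} (hy : 0 < y) :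
    Summable (fun k : ℕ => 1 / ((k : ℝ) + 1) - 1 / (y + k)) := by
  apply Summable.of_norm
  apply Summable.of_nonneg_of_le (fun k => norm_nonneg _)
    (fun k => term_bound hy (le_refl _) k)
  exact (summable_inv_sq.mul_left _)

/-- The key lemma: the log-derivative of `Γ` is given by the standard series. -/
lemma hasDerivAt_log_Gamma {x : ℝ} (hx : 0 < x) :
    HasDerivAt (fun y => Real.log (Real.Gamma y))
      (-γ + ∑' k : ℕ, (1 / ((k : ℝ) + 1) - 1 / (x + k))) x := by
  set a : ℝ := x / 2 with ha
  set b : ℝ := x + 1 with hb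
  have hax : a < x := by simp [ha]; linarith
  have hxb : x < b := by simp [hb]
  have ha0 : 0 < a := by positivity
  set s : Set ℝ := Ioo a b with hs
  have hxs : x ∈ s := ⟨hax, hxb⟩
  set F : ℕ → ℝ → ℝ := fun N y =>
    y * Real.log N + Real.log (N ! : ℝ) - ∑ k ∈ Finset.range (N + 1), Real.log (y + k) with hF
  set F' : ℕ → ℝ → ℝ := fun N y =>
    Real.log N - ∑ k ∈ Finset.range (N + 1), 1 / (y + k) with hF'
  have hspos : ∀ y ∈ s, 0 < y := fun y hy => lt_trans ha0 hy.1
  -- derivative of F N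
  have hder : ∀ N : ℕ, ∀ y ∈ s, HasDerivAt (F N) (F' N y) y := by
    intro N y hy
    have hy0 := hspos y hy
    have h1 : HasDerivAt (fun y : ℝ => y * Real.log N) (Real.log N) y :=
      hasDerivAt_mul_const _
    have h2 : HasDerivAt (fun y : ℝ => ∑ k ∈ Finset.range (N + 1), Real.log (y + k))
        (∑ k ∈ Finset.range (N + 1), 1 / (y + k)) y := by
      apply HasDerivAt.fun_sum
      intro k _
      have hk : (0:ℝ) < y + k := by positivity
      have := ((hasDerivAt_id y).add_const (k:ℝ)).log hk.ne'
      simpa using this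
    simpa [hF, hF'] using (h1.add_const (Real.log (N ! : ℝ))).fun_sub h2
  -- uniform convergence of F'
  have huc : TendstoUniformlyOn F'
      (fun y => -γ + ∑' k : ℕ, (1 / ((k : ℝ) + 1) - 1 / (y + k))) atTop s := by
    have hb1 : (0:ℝ) < b := by linarith
    -- constants part
    have hc : Tendsto (fun N : ℕ => Real.log N - ∑ k ∈ Finset.range (N + 1), 1 / ((k:ℝ) + 1))
        atTop (𝓝 (-γ)) := by
      have h1 : Tendsto (fun N : ℕ => (harmonic (N+1) : ℝ) - Real.log ((N:ℝ)+1)) atTop (𝓝 γ) := by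
        refine (Real.tendsto_harmonic_sub_log.comp (tendsto_add_atTop_nat 1)).congr fun N => ?_
        simp only [Function.comp]
        push_cast
        ring
      have h2 : Tendsto (fun N : ℕ => Real.log ((N:ℝ)+1) - Real.log N) atTop (𝓝 0) := by
        have h3 : Tendsto (fun N : ℕ => 1 + 1/(N:ℝ)) atTop (𝓝 1) := by
          simpa using (tendsto_const_nhds (x := (1:ℝ))).add tendsto_one_div_atTop_nhds_zero_nat
        have h4 : Tendsto (fun N : ℕ => Real.log (1 + 1/(N:ℝ))) atTop (𝓝 0) := by
          have := ((Real.continuousAt_log (by norm_num : (1:ℝ) ≠ 0)).tendsto).comp h3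
          simpa [Function.comp_def] using this
        apply h4.congr'
        filter_upwards [eventually_gt_atTop 0] with N hN
        have hN0 : (0:ℝ) < N := by exact_mod_cast hN
        rw [show (1 : ℝ) + 1/(N:ℝ) = ((N:ℝ)+1)/N by field_simp, Real.log_div (by positivity) hN0.ne']
      have := (h1.add h2).neg
      simp only [neg_add_rev] at this
      apply Tendsto.congr' _ (by convert this using 2; ring)
      filter_upwards with N
      have : (harmonic (N+1) : ℝ) = ∑ k ∈ Finset.range (N + 1), 1 / ((k:ℝ) + 1) := by
        rw [harmonic]; push_cast; simp [one_div]
      rw [this]; ring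
    have hcu : TendstoUniformlyOn (fun N : ℕ => fun _ : ℝ =>
        Real.log N - ∑ k ∈ Finset.range (N + 1), 1 / ((k:ℝ) + 1)) (fun _ => -γ) atTop s :=
      hc.tendstoUniformlyOn_const s
    -- series part
    have hsum : TendstoUniformlyOn
        (fun N : ℕ => fun y : ℝ => ∑ k ∈ Finset.range N, (1 / ((k:ℝ) + 1) - 1 / (y + k)))
        (fun y => ∑' k : ℕ, (1 / ((k:ℝ) + 1) - 1 / (y + k))) atTop s := by
      apply tendstoUniformlyOn_tsum_nat (u := fun k => (1 + b) / min a 1 * (1 / ((k:ℝ)+1)^2))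
      · exact summable_inv_sq.mul_left _
      · intro k y hy
        have hy0 := hspos y hy
        have hyb : y < b := hy.2
        have hya : a < y := hy.1
        have h1 : |y - 1| ≤ 1 + b := by
          rw [abs_sub_le_iff]; constructor <;> nlinarith
        have h2 := term_bound hy0 h1 k
        have hmin : min a 1 ≤ min y 1 := by
          apply min_le_min (le_of_lt hya) (le_refl _)
        have hmin0 : (0:ℝ) < min a 1 := lt_min ha0 one_pos
        calc ‖1 / ((k:ℝ) + 1) - 1 / (y + k)‖ ≤ (1 + b) / min y 1 * (1 / ((k:ℝ)+1)^2) := h2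
          _ ≤ (1 + b) / min a 1 * (1 / ((k:ℝ)+1)^2) := by
              apply mul_le_mul_of_nonneg_right _ (by positivity)
              exact div_le_div_of_nonneg_left (by linarith) hmin0 hmin
    have hsum' : TendstoUniformlyOn
        (fun N : ℕ => fun y : ℝ => ∑ k ∈ Finset.range (N+1), (1 / ((k:ℝ) + 1) - 1 / (y + k)))
        (fun y => ∑' k : ℕ, (1 / ((k:ℝ) + 1) - 1 / (y + k))) atTop s :=
      fun u hu => (tendsto_add_atTop_nat 1).eventually (hsum u hu)
    have := hcu.add hsum'
    apply this.congr
    filter_upwards with N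
    intro y hy
    simp only [Pi.add_apply, hF', Finset.sum_sub_distrib]
    ring
  -- pointwise convergence of F
  have hptw : ∀ y ∈ s, Tendsto (fun N => F N y) atTop (𝓝 (Real.log (Real.Gamma y))) := by
    intro y hy
    have hy0 := hspos y hy
    have hG : Tendsto (fun N => Real.log (Real.GammaSeq y N)) atTop
        (𝓝 (Real.log (Real.Gamma y))) :=
      ((Real.continuousAt_log (Real.Gamma_pos_of_pos hy0).ne').tendsto).comp
        (Real.GammaSeq_tendsto_Gamma y)
    apply hG.congr'
    filter_upwards [eventually_ge_atTop 1] with N hN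
    have hN0 : (0:ℝ) < N := by exact_mod_cast hN
    have hprod : ∀ j ∈ Finset.range (N+1), y + (j:ℝ) ≠ 0 := by
      intro j _; positivity
    rw [Real.GammaSeq, Real.log_div (by positivity) (Finset.prod_ne_zero_iff.mpr hprod),
      Real.log_mul (by positivity) (by positivity), Real.log_rpow hN0,
      Real.log_prod hprod]
  exact hasDerivAt_of_tendstoUniformlyOn isOpen_Ioo huc
    (Eventually.of_forall hder) hptw hxs

lemma digamma_eq {x : ℝ} (hx : 0 < x) :
    digamma x = -γ + ∑' k : ℕ, (1 / ((k : ℝ) + 1) - 1 / (x + k)) := by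
  have h1 := hasDerivAt_log_Gamma hx
  have hG : DifferentiableAt ℝ Real.Gamma x :=
    Real.differentiableAt_Gamma (fun m => by
      have : (0:ℝ) ≤ m := m.cast_nonneg
      intro h; rw [h] at hx; linarith)
  have h2 : HasDerivAt (fun y => Real.log (Real.Gamma y))
      (deriv Real.Gamma x / Real.Gamma x) x :=
    hG.hasDerivAt.log (Real.Gamma_pos_of_pos hx).ne'
  have := h2.unique h1
  rw [digamma, this]

/-- The summand in the series representation of `g2`. -/
noncomputable def hterm (x : ℝ) (k : ℕ) : ℝ :=
  (1 / ((k:ℝ) + 1) - 1 / ((x + 1) + (k:ℝ)))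
    + 2 * x * (1 / (x + ((k:ℝ) + 1)) - 1 / (2 * x + ((k:ℝ) + 1)))

lemma summable_shift {x : ℝ} (hx : 0 < x) :
    Summable (fun k : ℕ => 2 * x * (1 / (x + ((k:ℝ) + 1)) - 1 / (2 * x + ((k:ℝ) + 1)))) := by
  have hsub : Summable (fun k : ℕ => 1 / (x + (k:ℝ)) - 1 / (2 * x + (k:ℝ))) := by
    apply ((summable_term (by positivity : (0:ℝ) < 2 * x)).sub (summable_term hx)).congr
    intro k; ring
  have W : Summable (fun k : ℕ => 2 * x * (1 / (x + (k:ℝ)) - 1 / (2 * x + (k:ℝ)))) :=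
    hsub.mul_left _
  apply ((summable_nat_add_iff 1).mpr W).congr
  intro k; push_cast; ring_nf

lemma summable_hterm {x : ℝ} (hx : 0 < x) : Summable (fun k => hterm x k) := by
  exact (summable_term (by linarith : (0:ℝ) < x + 1)).add (summable_shift hx)

lemma g2_eq {x : ℝ} (hx : 0 < x) : g2 x = 1 / 2 - ∑' k : ℕ, hterm x k := by
  have hy0 : (0:ℝ) < 2 * x := by positivity
  have hsum2 := summable_term hy0
  have hsum3 := summable_term hx
  have e1 : digamma (2 * x) - digamma x = ∑' k : ℕ, (1 / (x + (k:ℝ)) - 1 / (2 * x + (k:ℝ))) := by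
    rw [digamma_eq hy0, digamma_eq hx]
    calc (-γ + ∑' k : ℕ, (1 / ((k:ℝ) + 1) - 1 / (2 * x + k)))
          - (-γ + ∑' k : ℕ, (1 / ((k:ℝ) + 1) - 1 / (x + k)))
        = (∑' k : ℕ, (1 / ((k:ℝ) + 1) - 1 / (2 * x + k)))
          - ∑' k : ℕ, (1 / ((k:ℝ) + 1) - 1 / (x + k)) := by ring
      _ = ∑' k : ℕ, ((1 / ((k:ℝ) + 1) - 1 / (2 * x + k)) - (1 / ((k:ℝ) + 1) - 1 / (x + k))) :=
          (Summable.tsum_sub hsum2 hsum3).symm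
      _ = ∑' k : ℕ, (1 / (x + (k:ℝ)) - 1 / (2 * x + (k:ℝ))) := tsum_congr fun k => by ring
  have hsub : Summable (fun k : ℕ => 1 / (x + (k:ℝ)) - 1 / (2 * x + (k:ℝ))) := by
    apply (hsum2.sub hsum3).congr
    intro k; ring
  have W : Summable (fun k : ℕ => 2 * x * (1 / (x + (k:ℝ)) - 1 / (2 * x + (k:ℝ)))) :=
    hsub.mul_left _
  have e2 : 2 * x * (digamma (2 * x) - digamma x)
      = 1 + ∑' k : ℕ, 2 * x * (1 / (x + ((k:ℝ) + 1)) - 1 / (2 * x + ((k:ℝ) + 1))) := by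
    rw [e1, ← tsum_mul_left, Summable.tsum_eq_zero_add W]
    congr 1
    · push_cast
      rw [add_zero, add_zero]
      have h1 : 1 / x - 1 / (2 * x) = 1 / (2 * x) := by
        field_simp
        norm_num
      rw [h1]
      field_simp
    · apply tsum_congr
      intro k; push_cast; ring_nf
  have h1 : digamma (x + 1) = -γ + ∑' k : ℕ, (1 / ((k:ℝ) + 1) - 1 / ((x + 1) + k)) :=
    digamma_eq (by linarith)
  have e3 : ∑' k : ℕ, hterm x k
      = (∑' k : ℕ, (1 / ((k:ℝ) + 1) - 1 / ((x + 1) + k)))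
        + ∑' k : ℕ, 2 * x * (1 / (x + ((k:ℝ) + 1)) - 1 / (2 * x + ((k:ℝ) + 1))) :=
    Summable.tsum_add (summable_term (by linarith)) (summable_shift hx)
  rw [g2, h1, e2, e3]
  ring

lemma hterm_lt {x y : ℝ} (hx : 0 < x) (hxy : x < y) (k : ℕ) : hterm x k < hterm y k := by
  set K : ℝ := (k:ℝ) + 1 with hK
  have hK0 : 0 < K := by positivity
  have hy0 : 0 < y := hx.trans hxy
  have key : ∀ z : ℝ, 0 < z → hterm z k
      = (1 / K - 1 / (z + K)) + 2 * z ^ 2 / ((z + K) * (2 * z + K)) := by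
    intro z hz
    have h1 : (0:ℝ) < z + K := by positivity
    have h2 : (0:ℝ) < 2 * z + K := by positivity
    rw [hterm]
    have e1 : (z + 1) + (k:ℝ) = z + K := by rw [hK]; ring
    have e2 : z + ((k:ℝ) + 1) = z + K := by rw [hK]
    have e3 : 2 * z + ((k:ℝ) + 1) = 2 * z + K := by rw [hK]
    rw [e1, e2, e3]
    field_simp
    ring
  rw [key x hx, key y hy0]
  have hA : 1 / K - 1 / (x + K) < 1 / K - 1 / (y + K) := by
    have := one_div_lt_one_div_of_lt (by positivity : (0:ℝ) < x + K) (by linarith : x + K < y + K)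
    linarith
  have hB : 2 * x ^ 2 / ((x + K) * (2 * x + K)) ≤ 2 * y ^ 2 / ((y + K) * (2 * y + K)) := by
    rw [div_le_div_iff₀ (by positivity) (by positivity)]
    nlinarith [mul_pos (mul_pos hK0 (mul_pos hx hy0)) (sub_pos.mpr hxy),
      mul_pos (mul_pos hK0 hK0) (mul_pos (sub_pos.mpr hxy) (by linarith : (0:ℝ) < x + y))]
  linarith


theorem g2_strictAntiOn : StrictAntiOn g2 (Set.Ioo (0 : ℝ) 1) := by
  intro x hx y hy hxy
  have hy0 : 0 < y := hx.1.trans hxy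
  rw [g2_eq hx.1, g2_eq hy0]
  have : ∑' k : ℕ, hterm x k < ∑' k : ℕ, hterm y k :=
    Summable.tsum_lt_tsum (fun k => (hterm_lt hx.1 hxy k).le) (hterm_lt hx.1 hxy 0)
      (summable_hterm hx.1) (summable_hterm hy0)
  linarith
end

section
/- The function g₃(x) := 2 - γ - ψ(x+1) + (x/2)(5-3x)ψ(x) - x(1-6x)ψ(2x) - (3x/2)(1+3x)ψ(3x) is strictly decreasing on the interval (0,1), where ψ is the digamma function and γ is the Euler–Mascheroni constant. -/
open Filter Topology Set Finset

namespace G3Aux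
local notation "γ" => Real.eulerMascheroniConstant

/-- series form of digamma -/
noncomputable def psi (x : ℝ) : ℝ := -γ + ∑' k : ℕ, (1/((k:ℝ)+1) - 1/(x+k))
/-- trigamma -/
noncomputable def tri (x : ℝ) : ℝ := ∑' k : ℕ, 1/(x+(k:ℝ))^2

lemma base_summable : Summable (fun k : ℕ => 1/((k:ℝ)+1)^2) := by
  have h : Summable (fun n : ℕ => 1 / (n : ℝ) ^ 2) := Real.summable_one_div_nat_pow.mpr one_lt_two
  have := (summable_nat_add_iff 1).mpr h
  refine this.congr fun n => by push_cast; ring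

lemma min_bound {y : ℝ} (hy : 0 < y) (k : ℕ) : min y 1 * ((k:ℝ)+1) ≤ y + k := by
  have h1 : min y 1 ≤ y := min_le_left _ _
  have h2 : min y 1 ≤ 1 := min_le_right _ _
  have h3 : (0:ℝ) ≤ k := k.cast_nonneg
  nlinarith

lemma min_pos {y : ℝ} (hy : 0 < y) : 0 < min y 1 := lt_min hy one_pos

lemma summable_sq {y : ℝ} (hy : 0 < y) : Summable (fun k : ℕ => 1/(y+(k:ℝ))^2) := by
  refine Summable.of_nonneg_of_le (fun k => by positivity)
    (fun k => ?_) (base_summable.mul_left ((1/min y 1)^2))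
  have hc := min_pos hy
  have h1 : 0 < min y 1 * ((k:ℝ)+1) := by positivity
  have h2 : (min y 1 * ((k:ℝ)+1))^2 ≤ (y+k)^2 := by
    apply pow_le_pow_left₀ h1.le (min_bound hy k)
  calc 1/(y+(k:ℝ))^2 ≤ 1/(min y 1 * ((k:ℝ)+1))^2 := by
        apply one_div_le_one_div_of_le (by positivity) h2
    _ = (1/min y 1)^2 * (1/((k:ℝ)+1)^2) := by
        field_simp

lemma summable_a {y : ℝ} (hy : 0 < y) :
    Summable (fun k : ℕ => 1/((k:ℝ)+1) - 1/(y+k)) := by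
  refine Summable.of_norm_bounded (base_summable.mul_left ((y+1) * (1/min y 1))) fun k => ?_
  have hc := min_pos hy
  have hyk : 0 < y + (k:ℝ) := by positivity
  have hk1 : 0 < (k:ℝ)+1 := by positivity
  have heq : 1/((k:ℝ)+1) - 1/(y+k) = (y-1)/(((k:ℝ)+1)*(y+k)) := by
    field_simp; ring
  rw [heq, norm_div, Real.norm_eq_abs, Real.norm_eq_abs]
  rw [abs_of_pos (by positivity : (0:ℝ) < ((k:ℝ)+1)*(y+k))]
  have h1 : |y - 1| ≤ y + 1 := by
    rw [abs_le]; constructor <;> nlinarith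
  have h2 : min y 1 * (((k:ℝ)+1) * ((k:ℝ)+1)) ≤ ((k:ℝ)+1)*(y+k) := by
    have := min_bound hy k
    have : min y 1 * ((k:ℝ)+1) ≤ y + k := this
    nlinarith [hk1]
  calc |y-1| / (((k:ℝ)+1)*(y+k)) ≤ (y+1) / (min y 1 * (((k:ℝ)+1)*((k:ℝ)+1))) := by
        apply div_le_div₀ (by positivity) h1 (by positivity) h2
    _ = (y+1) * (1/min y 1) * (1/((k:ℝ)+1)^2) := by
        rw [sq]
        field_simp

end G3Aux
open Filter Topology Set Finset

namespace G3Aux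
local notation "γ" => Real.eulerMascheroniConstant

lemma tuo_const {c : ℕ → ℝ} {L : ℝ} (h : Tendsto c atTop (𝓝 L)) (K : Set ℝ) :
    TendstoUniformlyOn (fun n (_ : ℝ) => c n) (fun _ => L) atTop K := by
  rw [Metric.tendstoUniformlyOn_iff]
  intro ε hε
  filter_upwards [Metric.tendsto_nhds.mp h ε hε] with n hn y _
  rwa [dist_comm] at hn

lemma tuo_tail {K : Set ℝ} (hKs : K ⊆ Ioi 0) :
    TendstoUniformlyOn (fun (n : ℕ) (y : ℝ) => 1/(y+(n:ℝ))) (fun _ => 0) atTop K := by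
  rw [Metric.tendstoUniformlyOn_iff]
  intro ε hε
  filter_upwards [eventually_gt_atTop (max 1 ⌈1/ε⌉₊)] with n hn y hy
  have hy0 : 0 < y := hKs hy
  have hn1 : (1:ℝ) ≤ n := by exact_mod_cast (le_max_left _ _).trans hn.le
  have hn2 : 1/ε < n := by
    have h1 : (⌈1/ε⌉₊ : ℝ) < n := by exact_mod_cast (le_max_right _ _).trans_lt hn
    exact (Nat.le_ceil _).trans_lt h1
  have hpos : (0:ℝ) < n := by linarith
  rw [dist_eq_norm]
  have h3 : 1/(y+(n:ℝ)) ≤ 1/(n:ℝ) := by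
    apply one_div_le_one_div_of_le hpos; linarith
  have h4 : (1:ℝ)/n < ε := by
    rw [div_lt_iff₀ hpos]
    calc (1:ℝ) = ε * (1/ε) := by field_simp
    _ < ε * n := by exact mul_lt_mul_of_pos_left hn2 hε
  have h5 : 0 < 1/(y+(n:ℝ)) := by positivity
  simp only [zero_sub, norm_neg, Real.norm_eq_abs, abs_of_pos h5]
  linarith

/-- uniform convergence of partial sums of `1/(y+k)^2` on compacts of `Ioi 0` -/
lemma tuo_sq {K : Set ℝ} (hK : IsCompact K) (hKs : K ⊆ Ioi 0) :
    TendstoUniformlyOn (fun (N : ℕ) (y : ℝ) => ∑ i ∈ Finset.range N, 1/(y+(i:ℝ))^2)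
      (fun y => tri y) atTop K := by
  rcases K.eq_empty_or_nonempty with rfl | hne
  · simp [tendstoUniformlyOn_iff_tendstoUniformlyOnFilter,
      TendstoUniformlyOnFilter]
  obtain ⟨a, haK, ha⟩ := hK.exists_isLeast hne
  have ha0 : 0 < a := hKs haK
  have hc := min_pos ha0
  apply tendstoUniformlyOn_tsum_nat (u := fun k => (1/min a 1)^2 * (1/((k:ℝ)+1)^2))
    (base_summable.mul_left _)
  intro k y hy
  have hy0 : 0 < y := hKs hy
  have hay : a ≤ y := ha hy
  have hyk : 0 < y + (k:ℝ) := by positivity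
  rw [Real.norm_eq_abs, abs_of_pos (by positivity : (0:ℝ) < 1/(y+(k:ℝ))^2)]
  have h2 : (min a 1 * ((k:ℝ)+1))^2 ≤ (y+k)^2 := by
    apply pow_le_pow_left₀ (by positivity)
    calc min a 1 * ((k:ℝ)+1) ≤ a + k := min_bound ha0 k
    _ ≤ y + k := by linarith
  calc 1/(y+(k:ℝ))^2 ≤ 1/(min a 1 * ((k:ℝ)+1))^2 :=
        one_div_le_one_div_of_le (by positivity) h2
  _ = (1/min a 1)^2 * (1/((k:ℝ)+1)^2) := by rw [mul_pow]; field_simp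

/-- uniform convergence of partial sums of `1/(k+1) - 1/(y+k)` on compacts of `Ioi 0` -/
lemma tuo_a {K : Set ℝ} (hK : IsCompact K) (hKs : K ⊆ Ioi 0) :
    TendstoUniformlyOn (fun (N : ℕ) (y : ℝ) => ∑ i ∈ Finset.range N, (1/((i:ℝ)+1) - 1/(y+i)))
      (fun y => ∑' k : ℕ, (1/((k:ℝ)+1) - 1/(y+k))) atTop K := by
  rcases K.eq_empty_or_nonempty with rfl | hne
  · simp [tendstoUniformlyOn_iff_tendstoUniformlyOnFilter, TendstoUniformlyOnFilter]
  obtain ⟨a, haK, ha⟩ := hK.exists_isLeast hne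
  obtain ⟨b, hbK, hb⟩ := hK.exists_isGreatest hne
  have ha0 : 0 < a := hKs haK
  have hc := min_pos ha0
  apply tendstoUniformlyOn_tsum_nat (u := fun k => ((b+1) * (1/min a 1)) * (1/((k:ℝ)+1)^2))
    (base_summable.mul_left _)
  intro k y hy
  have hy0 : 0 < y := hKs hy
  have hay : a ≤ y := ha hy
  have hyb : y ≤ b := hb hy
  have hyk : 0 < y + (k:ℝ) := by positivity
  have hk1 : (0:ℝ) < (k:ℝ)+1 := by positivity
  have heq : 1/((k:ℝ)+1) - 1/(y+k) = (y-1)/(((k:ℝ)+1)*(y+k)) := by field_simp; ring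
  rw [heq, norm_div, Real.norm_eq_abs, Real.norm_eq_abs,
    abs_of_pos (by positivity : (0:ℝ) < ((k:ℝ)+1)*(y+k))]
  have h1 : |y - 1| ≤ b + 1 := by
    rw [abs_le]; constructor <;> nlinarith
  have h2 : min a 1 * (((k:ℝ)+1) * ((k:ℝ)+1)) ≤ ((k:ℝ)+1)*(y+k) := by
    have h3 : min a 1 * ((k:ℝ)+1) ≤ a + k := min_bound ha0 k
    nlinarith
  calc |y-1| / (((k:ℝ)+1)*(y+k)) ≤ (b+1) / (min a 1 * (((k:ℝ)+1)*((k:ℝ)+1))) :=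
        div_le_div₀ (by linarith) h1 (by positivity) h2
  _ = (b+1) * (1/min a 1) * (1/((k:ℝ)+1)^2) := by rw [sq]; field_simp

end G3Aux
namespace G3Aux
open Nat
local notation "γ" => Real.eulerMascheroniConstant

lemma harmonic_cast (n : ℕ) : ((harmonic n : ℚ) : ℝ) = ∑ i ∈ Finset.range n, 1/((i:ℝ)+1) := by
  rw [harmonic]
  push_cast
  simp [one_div]

lemma hasDerivAt_psi {x : ℝ} (hx : 0 < x) : HasDerivAt psi (tri x) x := by
  have := hasDerivAt_of_tendstoLocallyUniformlyOn (l := atTop) isOpen_Ioi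
    (f := fun (N : ℕ) (y : ℝ) => -γ + ∑ i ∈ Finset.range N, (1/((i:ℝ)+1) - 1/(y+i)))
    (f' := fun (N : ℕ) (y : ℝ) => ∑ i ∈ Finset.range N, 1/(y+(i:ℝ))^2)
    (g := psi) (g' := tri) ?_ ?_ ?_ (mem_Ioi.mpr hx)
  · exact this
  · rw [tendstoLocallyUniformlyOn_iff_forall_isCompact isOpen_Ioi]
    intro K hKs hK
    exact tuo_sq hK hKs
  · filter_upwards with N y hy
    have hy0 : 0 < y := hy
    have hterm : ∀ i ∈ Finset.range N,
        HasDerivAt (fun z : ℝ => 1/((i:ℝ)+1) - 1/(z+i)) (1/(y+(i:ℝ))^2) y := by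
      intro i _
      have hyi : y + (i:ℝ) ≠ 0 := by positivity
      have h1 : HasDerivAt (fun z : ℝ => (z + (i:ℝ))⁻¹) (-1/(y+(i:ℝ))^2) y := by
        have := ((hasDerivAt_id y).add_const (i:ℝ)).inv hyi
        simpa [Pi.inv_def] using this
      have h2 := h1.const_sub (1/((i:ℝ)+1))
      have : 1/((i:ℝ)+1) - -1/(y+(i:ℝ))^2 * 1 = 1/((i:ℝ)+1) + 1/(y+(i:ℝ))^2 := by ring
      simpa [one_div, neg_div] using h2
    have := (HasDerivAt.fun_sum hterm).const_add (-γ)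
    exact this
  · intro y hy
    exact ((summable_a hy).hasSum.tendsto_sum_nat).const_add (-γ)

lemma hasDerivAt_logGamma {x : ℝ} (hx : 0 < x) :
    HasDerivAt (fun y => Real.log (Real.Gamma y)) (psi x) x := by
  have := hasDerivAt_of_tendstoLocallyUniformlyOn (l := atTop) isOpen_Ioi
    (f := fun (n : ℕ) (y : ℝ) =>
      y * Real.log n + Real.log (n !) - ∑ i ∈ Finset.range (n+1), Real.log (y + i))
    (f' := fun (n : ℕ) (y : ℝ) => Real.log n - ∑ i ∈ Finset.range (n+1), 1/(y + i))
    (g := fun y => Real.log (Real.Gamma y)) (g' := psi) ?_ ?_ ?_ (mem_Ioi.mpr hx)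
  · exact this
  · rw [tendstoLocallyUniformlyOn_iff_forall_isCompact isOpen_Ioi]
    intro K hKs hK
    have hdecomp : (fun (n : ℕ) (y : ℝ) => Real.log n - ∑ i ∈ Finset.range (n+1), 1/(y + i))
        = fun (n : ℕ) (y : ℝ) => ((Real.log n - ((harmonic n : ℚ) : ℝ)) +
            ∑ i ∈ Finset.range n, (1/((i:ℝ)+1) - 1/(y+i))) - 1/(y+(n:ℝ)) := by
      funext n y
      rw [harmonic_cast, Finset.sum_range_succ, Finset.sum_sub_distrib]
      ring
    rw [hdecomp]
    have hconst : Tendsto (fun n : ℕ => Real.log n - ((harmonic n : ℚ) : ℝ)) atTop (𝓝 (-γ)) := by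
      have := Real.tendsto_harmonic_sub_log.neg
      simp only [neg_sub] at this
      exact this
    have h1 := (tuo_const hconst K).add (tuo_a hK hKs)
    have h2 := h1.sub (tuo_tail hKs)
    have hg : (((fun _ : ℝ => -γ) + fun y : ℝ => ∑' k : ℕ, (1/((k:ℝ)+1) - 1/(y+k)))
        - fun _ : ℝ => (0:ℝ)) = psi := by
      funext y
      simp [psi]
    rw [hg] at h2
    exact h2
  · filter_upwards with n y hy
    have hy0 : 0 < y := hy
    have h1 : HasDerivAt (fun z : ℝ => z * Real.log n) (Real.log n) y := by
      simpa using (hasDerivAt_id y).mul_const (Real.log n)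
    have hsum : HasDerivAt (fun z : ℝ => ∑ i ∈ Finset.range (n+1), Real.log (z + i))
        (∑ i ∈ Finset.range (n+1), 1/(y + (i:ℝ))) y := by
      apply HasDerivAt.fun_sum
      intro i _
      have hyi : y + (i:ℝ) ≠ 0 := by positivity
      have := ((hasDerivAt_id y).add_const (i:ℝ)).log hyi
      simpa [one_div] using this
    exact (h1.add_const (Real.log (n !))).sub hsum
  · intro y hy
    have hy0 : 0 < y := hy
    have hΓ : 0 < Real.Gamma y := Real.Gamma_pos_of_pos hy0
    have hcont : Tendsto (fun n => Real.log (Real.GammaSeq y n)) atTop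
        (𝓝 (Real.log (Real.Gamma y))) :=
      ((Real.continuousAt_log hΓ.ne').tendsto).comp (Real.GammaSeq_tendsto_Gamma y)
    apply hcont.congr'
    filter_upwards [eventually_ge_atTop 1] with n hn
    have hn0 : (0:ℝ) < n := by exact_mod_cast hn
    have hrpow : (0:ℝ) < (n:ℝ) ^ y := Real.rpow_pos_of_pos hn0 y
    have hfact : (0:ℝ) < (n ! : ℝ) := by exact_mod_cast n.factorial_pos
    have hprod : (0:ℝ) < ∏ j ∈ Finset.range (n+1), (y + j) := by
      apply Finset.prod_pos
      intro j _
      positivity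
    rw [Real.GammaSeq, Real.log_div (by positivity) hprod.ne', Real.log_mul hrpow.ne' hfact.ne',
      Real.log_rpow hn0, Real.log_prod (fun j _ => by positivity)]

end G3Aux
namespace G3Aux
local notation "γ" => Real.eulerMascheroniConstant

lemma digamma_eq {x : ℝ} (hx : 0 < x) : digamma x = psi x := by
  have hΓ : 0 < Real.Gamma x := Real.Gamma_pos_of_pos hx
  have hd : DifferentiableAt ℝ Real.Gamma x := by
    apply Real.differentiableAt_Gamma
    intro m
    exact ((neg_nonpos.mpr (Nat.cast_nonneg m)).trans_lt hx).ne'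
  have h1 : HasDerivAt (fun y => Real.log (Real.Gamma y)) (deriv Real.Gamma x / Real.Gamma x) x :=
    hd.hasDerivAt.log hΓ.ne'
  exact h1.unique (hasDerivAt_logGamma hx)

/-- the derivative of `g3` -/
noncomputable def Dg3 (x : ℝ) : ℝ :=
  -tri (x+1) + (5/2-3*x)*psi x + x/2*(5-3*x)*tri x - (1-12*x)*psi (2*x)
    - 2*x*(1-6*x)*tri (2*x) - (3/2+9*x)*psi (3*x) - 9*x/2*(1+3*x)*tri (3*x)

lemma hasDerivAt_g3 {x : ℝ} (hx : 0 < x) : HasDerivAt g3 (Dg3 x) x := by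
  have h2x : 0 < 2*x := by linarith
  have h3x : 0 < 3*x := by linarith
  have hx1 : 0 < x + 1 := by linarith
  have hpsi1 : HasDerivAt (fun y : ℝ => psi (y+1)) (tri (x+1)) x := by
    have := (hasDerivAt_psi hx1).comp x ((hasDerivAt_id x).add_const 1)
    simpa [Function.comp_def] using this
  have hpsix := hasDerivAt_psi hx
  have hpsi2 : HasDerivAt (fun y : ℝ => psi (2*y)) (tri (2*x) * 2) x := by
    have h := (hasDerivAt_psi h2x).comp x ((hasDerivAt_const x 2).mul (hasDerivAt_id x))
    simpa [Function.comp_def] using h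
  have hpsi3 : HasDerivAt (fun y : ℝ => psi (3*y)) (tri (3*x) * 3) x := by
    have h := (hasDerivAt_psi h3x).comp x ((hasDerivAt_const x 3).mul (hasDerivAt_id x))
    simpa [Function.comp_def] using h
  -- coefficient polynomials
  have hc1 : HasDerivAt (fun y : ℝ => y/2*(5-3*y)) (1/2*(5-3*x) + x/2*(-3)) x := by
    have := ((hasDerivAt_id x).div_const 2).mul
      ((hasDerivAt_const x 5).sub ((hasDerivAt_const x 3).mul (hasDerivAt_id x)))
    simpa [Pi.mul_def, Pi.sub_def] using this
  have hc2 : HasDerivAt (fun y : ℝ => y*(1-6*y)) (1*(1-6*x) + x*(-6)) x := by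
    have := (hasDerivAt_id x).mul
      ((hasDerivAt_const x 1).sub ((hasDerivAt_const x 6).mul (hasDerivAt_id x)))
    simpa [Pi.mul_def, Pi.sub_def] using this
  have hc3 : HasDerivAt (fun y : ℝ => 3*y/2*(1+3*y)) (3/2*(1+3*x) + 3*x/2*3) x := by
    have := (((hasDerivAt_const x 3).mul (hasDerivAt_id x)).div_const 2).mul
      ((hasDerivAt_const x 1).add ((hasDerivAt_const x 3).mul (hasDerivAt_id x)))
    simpa [Pi.mul_def, Pi.add_def] using this
  have hbig : HasDerivAt (fun y : ℝ => 2 - γ - psi (y+1) + y/2*(5-3*y)*psi y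
      - y*(1-6*y)*psi (2*y) - 3*y/2*(1+3*y)*psi (3*y))
      (0 - tri (x+1) + ((1/2*(5-3*x) + x/2*(-3))*psi x + x/2*(5-3*x)*tri x)
        - ((1*(1-6*x) + x*(-6))*psi (2*x) + x*(1-6*x)*(tri (2*x)*2))
        - ((3/2*(1+3*x) + 3*x/2*3)*psi (3*x) + 3*x/2*(1+3*x)*(tri (3*x)*3))) x := by
    exact ((((hasDerivAt_const x (2 - γ)).sub hpsi1).add (hc1.mul hpsix)).sub
      (hc2.mul hpsi2)).sub (hc3.mul hpsi3)
  have hev : g3 =ᶠ[𝓝 x] (fun y : ℝ => 2 - γ - psi (y+1) + y/2*(5-3*y)*psi y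
      - y*(1-6*y)*psi (2*y) - 3*y/2*(1+3*y)*psi (3*y)) := by
    filter_upwards [isOpen_Ioi.mem_nhds (mem_Ioi.mpr hx)] with y hy
    have hy0 : 0 < y := hy
    rw [g3, digamma_eq (by linarith : (0:ℝ) < y + 1), digamma_eq hy0,
      digamma_eq (by linarith : (0:ℝ) < 2*y), digamma_eq (by linarith : (0:ℝ) < 3*y)]
  have := hbig.congr_of_eventuallyEq hev
  refine this.congr_deriv ?_
  rw [Dg3]
  ring

end G3Aux
namespace G3Aux
local notation "γ" => Real.eulerMascheroniConstant
open Filter Topology Set Finset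

/-- the term of the series for `Dg3 - 1/x²` -/
noncomputable def w (k : ℕ) (x : ℝ) : ℝ :=
  ((x/2)*(5-3*x)-1) * (1/(x+(k:ℝ))^2) - 2*x*(1-6*x) * (1/(2*x+(k:ℝ))^2)
    - 9*x/2*(1+3*x) * (1/(3*x+(k:ℝ))^2)
    + (5/2-3*x) * (1/((k:ℝ)+1) - 1/(x+k))
    - (1-12*x) * (1/((k:ℝ)+1) - 1/(2*x+k))
    - (3/2+9*x) * (1/((k:ℝ)+1) - 1/(3*x+k))

lemma summable_w {x : ℝ} (hx : 0 < x) : Summable (fun k => w k x) := by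
  have h2x : 0 < 2*x := by linarith
  have h3x : 0 < 3*x := by linarith
  exact ((((((summable_sq hx).mul_left _).sub ((summable_sq h2x).mul_left _)).sub
    ((summable_sq h3x).mul_left _)).add ((summable_a hx).mul_left _)).sub
    ((summable_a h2x).mul_left _)).sub ((summable_a h3x).mul_left _)

lemma tri_shift {x : ℝ} (hx : 0 < x) : tri (x+1) = tri x - 1/x^2 := by
  have h0 := Summable.tsum_eq_zero_add (summable_sq hx)
  have h1 : tri (x+1) = ∑' k : ℕ, 1/(x+((k+1:ℕ):ℝ))^2 := by
    apply tsum_congr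
    intro k
    push_cast
    ring_nf
  rw [h1]
  unfold tri
  simp only [Nat.cast_zero, add_zero] at h0
  linarith [h0]

lemma Dg3_eq {x : ℝ} (hx : 0 < x) : Dg3 x = 1/x^2 + ∑' k, w k x := by
  have h2x : 0 < 2*x := by linarith
  have h3x : 0 < 3*x := by linarith
  have S1 := (summable_sq hx).mul_left (((x/2)*(5-3*x)-1))
  have S2 := (summable_sq h2x).mul_left (2*x*(1-6*x))
  have S3 := (summable_sq h3x).mul_left (9*x/2*(1+3*x))
  have S4 := (summable_a hx).mul_left ((5/2-3*x))
  have S5 := (summable_a h2x).mul_left ((1-12*x))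
  have S6 := (summable_a h3x).mul_left ((3/2+9*x))
  have hsw : ∑' k, w k x
      = ((x/2)*(5-3*x)-1) * tri x - 2*x*(1-6*x) * tri (2*x) - 9*x/2*(1+3*x) * tri (3*x)
        + (5/2-3*x) * (∑' k : ℕ, (1/((k:ℝ)+1) - 1/(x+k)))
        - (1-12*x) * (∑' k : ℕ, (1/((k:ℝ)+1) - 1/(2*x+k)))
        - (3/2+9*x) * (∑' k : ℕ, (1/((k:ℝ)+1) - 1/(3*x+k))) := by
    unfold w
    rw [Summable.tsum_sub (((((S1.sub S2).sub S3).add S4).sub S5)) S6,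
        Summable.tsum_sub ((((S1.sub S2).sub S3).add S4)) S5,
        Summable.tsum_add (((S1.sub S2).sub S3)) S4,
        Summable.tsum_sub ((S1.sub S2)) S3,
        Summable.tsum_sub S1 S2,
        tsum_mul_left, tsum_mul_left, tsum_mul_left, tsum_mul_left, tsum_mul_left, tsum_mul_left]
    rfl
  rw [Dg3, tri_shift hx, hsw, psi, psi, psi]
  ring

lemma w_zero {x : ℝ} (hx : 0 < x) : w 0 x = -(1/x^2) := by
  rw [w]
  push_cast
  field_simp
  ring

lemma w_succ_neg {x : ℝ} (hx : 0 < x) (hx1 : x < 1) (k : ℕ) : w (k+1) x < 0 := by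
  set n : ℝ := (k:ℝ)+1 with hn
  have hn1 : 1 ≤ n := by rw [hn]; linarith [(Nat.cast_nonneg k : (0:ℝ) ≤ k)]
  have hn0 : 0 < n := by linarith
  have hxn : 0 < x + n := by linarith
  have h2xn : 0 < 2*x + n := by linarith
  have h3xn : 0 < 3*x + n := by linarith
  have hcast : ((k+1:ℕ):ℝ) = n := by push_cast; rfl
  have key : w (k+1) x * ((x+n)^2*((2*x+n)^2*(3*x+n)^2))
      = -(n^4 + 8*n^4*x + 9*n^4*x^2 + 10*n^3*x + 51*n^3*x^2 + 36*n^3*x^3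
          + 37*n^2*x^2 + 108*n^2*x^3 + 33*n^2*x^4 + 60*n*x^3 + 75*n*x^4 + 36*x^4) := by
    rw [w, hcast]
    have hk1 : (0:ℝ) < n + 1 := by linarith
    field_simp
    ring
  have hx0 : (0:ℝ) ≤ x := hx.le
  have hn0' : (0:ℝ) ≤ n := hn0.le
  have t1 : 0 < n^4 := by positivity
  have t2 : 0 ≤ n^4*x := by positivity
  have t3 : 0 ≤ n^4*x^2 := by positivity
  have t4 : 0 ≤ n^3*x := by positivity
  have t5 : 0 ≤ n^3*x^2 := by positivity
  have t6 : 0 ≤ n^3*x^3 := by positivity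
  have t7 : 0 ≤ n^2*x^2 := by positivity
  have t8 : 0 ≤ n^2*x^3 := by positivity
  have t9 : 0 ≤ n^2*x^4 := by positivity
  have t10 : 0 ≤ n*x^3 := by positivity
  have t11 : 0 ≤ n*x^4 := by positivity
  have t12 : 0 ≤ x^4 := by positivity
  have hP : w (k+1) x * ((x+n)^2*((2*x+n)^2*(3*x+n)^2)) < 0 := by
    rw [key]; linarith
  have hD : 0 < (x+n)^2*((2*x+n)^2*(3*x+n)^2) := by positivity
  by_contra hcon
  push_neg at hcon
  nlinarith [mul_nonneg hcon hD.le]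

lemma Dg3_neg {x : ℝ} (hx : 0 < x) (hx1 : x < 1) : Dg3 x < 0 := by
  have hw := summable_w hx
  have hs1 : Summable (fun k => w (k+1) x) := (summable_nat_add_iff 1).mpr hw
  have h1 := Summable.tsum_eq_zero_add hw
  have h2 := Summable.tsum_eq_zero_add hs1
  have h3 : ∑' k : ℕ, w ((k+1)+1) x ≤ 0 :=
    tsum_nonpos fun k => (w_succ_neg hx hx1 (k+1)).le
  have h4 : w (0+1) x < 0 := w_succ_neg hx hx1 0
  rw [Dg3_eq hx, h1, w_zero hx, h2]
  linarith

end G3Aux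

theorem g3_strictAntiOn : StrictAntiOn g3 (Set.Ioo (0 : ℝ) 1) := by
  apply strictAntiOn_of_deriv_neg (convex_Ioo (0:ℝ) 1)
  · intro y hy
    exact (G3Aux.hasDerivAt_g3 hy.1).continuousAt.continuousWithinAt
  · intro y hy
    rw [interior_Ioo] at hy
    rw [(G3Aux.hasDerivAt_g3 hy.1).deriv]
    exact G3Aux.Dg3_neg hy.1 hy.2
end

section
/- For all x in (0,1), ψ'(x+1) + 2(ψ(2x) - ψ(x)) + 2x(2ψ'(2x) - ψ'(x)) ≥ π²/6 - 1 > 0, where ψ is the digamma function. -/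
section DigammaAux
open Real Filter Topology

noncomputable def diS (x : ℝ) : ℝ :=
  -Real.eulerMascheroniConstant + ∑' n : ℕ, (1/((n:ℝ)+1) - 1/((n:ℝ)+x))

noncomputable def triS (x : ℝ) : ℝ := ∑' n : ℕ, 1/((n:ℝ)+x)^2

lemma sum_inv_sq_succ : Summable (fun n : ℕ => 1/((n:ℝ)+1)^2) := by
  have := hasSum_zeta_two.summable
  rw [← summable_nat_add_iff 1] at this
  simpa using this

lemma nx_pos {x : ℝ} (hx : 0 < x) (n : ℕ) : 0 < (n:ℝ) + x := by positivity

lemma min_mul_le {x : ℝ} (hx : 0 < x) (n : ℕ) : min 1 x * ((n:ℝ)+1) ≤ (n:ℝ)+x := by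
  rcases le_total 1 x with h | h
  · rw [min_eq_left h]; nlinarith [Nat.cast_nonneg (α := ℝ) n]
  · rw [min_eq_right h]; nlinarith [Nat.cast_nonneg (α := ℝ) n]

lemma summable_diS {x : ℝ} (hx : 0 < x) :
    Summable (fun n : ℕ => 1/((n:ℝ)+1) - 1/((n:ℝ)+x)) := by
  have hm : 0 < min 1 x := lt_min one_pos hx
  apply Summable.of_norm_bounded (g := fun n : ℕ => (|x - 1| / min 1 x) * (1/((n:ℝ)+1)^2))
    (sum_inv_sq_succ.mul_left _)
  intro n
  have h1 : (0:ℝ) < (n:ℝ)+1 := by positivity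
  have h2 : (0:ℝ) < (n:ℝ)+x := nx_pos hx n
  have he : 1/((n:ℝ)+1) - 1/((n:ℝ)+x) = (x-1)/(((n:ℝ)+1)*((n:ℝ)+x)) := by
    field_simp
    ring
  rw [Real.norm_eq_abs, he, abs_div, abs_of_pos (by positivity : (0:ℝ) < ((n:ℝ)+1)*((n:ℝ)+x))]
  have hle : min 1 x * ((n:ℝ)+1)^2 ≤ ((n:ℝ)+1)*((n:ℝ)+x) := by
    have := min_mul_le hx n; nlinarith
  calc |x-1| / (((n:ℝ)+1)*((n:ℝ)+x)) ≤ |x-1| / (min 1 x * ((n:ℝ)+1)^2) :=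
        div_le_div_of_nonneg_left (abs_nonneg _) (by positivity) hle
    _ = |x-1| / min 1 x * (1/((n:ℝ)+1)^2) := by
        field_simp

lemma summable_triS {x : ℝ} (hx : 0 < x) : Summable (fun n : ℕ => 1/((n:ℝ)+x)^2) := by
  have hm : 0 < min 1 x := lt_min one_pos hx
  have hb : Summable (fun n : ℕ => (1/(min 1 x)^2) * (1/((n:ℝ)+1)^2)) :=
    sum_inv_sq_succ.mul_left _
  refine Summable.of_nonneg_of_le (fun n => by positivity) (fun n => ?_) hb
  have h2 : (0:ℝ) < (n:ℝ)+x := nx_pos hx n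
  have h1 : (0:ℝ) < (n:ℝ)+1 := by positivity
  have hle := min_mul_le hx n
  have hmp : (0:ℝ) < min 1 x * ((n:ℝ)+1) := mul_pos hm h1
  calc 1/((n:ℝ)+x)^2 ≤ 1/(min 1 x * ((n:ℝ)+1))^2 := by
        apply div_le_div_of_nonneg_left one_pos.le (pow_pos hmp 2)
        exact pow_le_pow_left₀ hmp.le hle 2
    _ = 1/(min 1 x)^2 * (1/((n:ℝ)+1)^2) := by
        rw [mul_pow]; exact (one_div_mul_one_div _ _).symm

lemma hasSum_telescope {x : ℝ} (hx : 0 < x) :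
    HasSum (fun n : ℕ => 1/((n:ℝ)+x) - 1/((n:ℝ)+1+x)) (1/x) := by
  rw [hasSum_iff_tendsto_nat_of_nonneg]
  · have heq : ∀ N : ℕ, ∑ n ∈ Finset.range N, (1/((n:ℝ)+x) - 1/((n:ℝ)+1+x))
        = 1/x - 1/((N:ℝ)+x) := by
      intro N
      have := Finset.sum_range_sub' (f := fun n : ℕ => 1/((n:ℝ)+x)) N
      simpa [add_right_comm] using this
    simp_rw [heq]
    have h1 : Tendsto (fun N : ℕ => 1/((N:ℝ)+x)) atTop (𝓝 0) := by
      have := tendsto_inv_atTop_zero.comp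
        (tendsto_atTop_add_const_right atTop x tendsto_natCast_atTop_atTop)
      exact this.congr (fun n => (one_div _).symm)
    simpa using (tendsto_const_nhds (x := 1/x)).sub h1
  · intro n
    have h1 : (0:ℝ) < (n:ℝ)+x := nx_pos hx n
    have h2 : (0:ℝ) < (n:ℝ)+1+x := by positivity
    have : 1/((n:ℝ)+1+x) ≤ 1/((n:ℝ)+x) := by
      apply div_le_div_of_nonneg_left one_pos.le h1; linarith
    linarith

lemma diS_rec {x : ℝ} (hx : 0 < x) : diS (x+1) = diS x + 1/x := by
  have h1 := summable_diS (by linarith : (0:ℝ) < x + 1)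
  have h2 := summable_diS hx
  have key : (∑' n : ℕ, (1/((n:ℝ)+1) - 1/((n:ℝ)+(x+1))))
      - (∑' n : ℕ, (1/((n:ℝ)+1) - 1/((n:ℝ)+x))) = 1/x := by
    rw [← Summable.tsum_sub h1 h2]
    have : ∀ n : ℕ, (1/((n:ℝ)+1) - 1/((n:ℝ)+(x+1))) - (1/((n:ℝ)+1) - 1/((n:ℝ)+x))
        = 1/((n:ℝ)+x) - 1/((n:ℝ)+1+x) := by intro n; ring_nf
    rw [tsum_congr this]
    exact (hasSum_telescope hx).tsum_eq
  simp only [diS]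
  linarith

lemma diS_one : diS 1 = -Real.eulerMascheroniConstant := by
  simp [diS]

lemma diS_nat (k : ℕ) : diS (k+1) = -Real.eulerMascheroniConstant + (harmonic k : ℝ) := by
  induction k with
  | zero => simp [diS_one]
  | succ n ih =>
      have h : (0:ℝ) < (n:ℝ)+1 := by positivity
      have := diS_rec h
      push_cast
      push_cast at ih
      rw [show ((n:ℝ)+1+1) = ((n:ℝ)+1)+1 by ring, this, ih, harmonic_succ]
      push_cast
      ring

lemma diS_mono {a b : ℝ} (ha : 0 < a) (hab : a ≤ b) : diS a ≤ diS b := by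
  have hb : 0 < b := lt_of_lt_of_le ha hab
  apply add_le_add_right
  apply Summable.tsum_le_tsum _ (summable_diS ha) (summable_diS hb)
  intro n
  have h1 := nx_pos ha n
  have h2 := nx_pos hb n
  have : 1/((n:ℝ)+b) ≤ 1/((n:ℝ)+a) := by
    apply div_le_div_of_nonneg_left one_pos.le h1; linarith
  linarith

lemma Gamma_diffAt {x : ℝ} (hx : 0 < x) : DifferentiableAt ℝ Real.Gamma x := by
  apply Real.differentiableAt_Gamma
  intro m
  have : (0:ℝ) ≤ (m:ℝ) := Nat.cast_nonneg m
  intro h; rw [h] at hx; linarith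

lemma hasDerivAt_logGamma {x : ℝ} (hx : 0 < x) :
    HasDerivAt (Real.log ∘ Real.Gamma) (digamma x) x := by
  have hΓ : 0 < Real.Gamma x := Real.Gamma_pos_of_pos hx
  have h := (Real.hasDerivAt_log hΓ.ne').comp x (Gamma_diffAt hx).hasDerivAt
  have : (Real.Gamma x)⁻¹ * deriv Real.Gamma x = digamma x := by
    rw [digamma, div_eq_inv_mul]
  rwa [this] at h

lemma digamma_rec {x : ℝ} (hx : 0 < x) : digamma (x+1) = digamma x + 1/x := by
  have hΓ : 0 < Real.Gamma x := Real.Gamma_pos_of_pos hx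
  have hd := Gamma_diffAt hx
  have h1 : HasDerivAt (fun y : ℝ => Real.Gamma (y+1)) (deriv Real.Gamma (x+1)) x := by
    have := ((Gamma_diffAt (by linarith : (0:ℝ) < x+1)).hasDerivAt).comp x
      ((hasDerivAt_id x).add_const 1)
    simpa [Function.comp_def] using this
  have h2 : HasDerivAt (fun y : ℝ => y * Real.Gamma y)
      (Real.Gamma x + x * deriv Real.Gamma x) x := by
    have := (hasDerivAt_id x).mul hd.hasDerivAt
    simpa [add_comm, Pi.mul_def] using this
  have heq : (fun y : ℝ => Real.Gamma (y+1)) =ᶠ[𝓝 x] (fun y : ℝ => y * Real.Gamma y) := by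
    filter_upwards [isOpen_Ioi.mem_nhds (Set.mem_Ioi.mpr hx)] with y hy
    exact Real.Gamma_add_one (ne_of_gt hy)
  have h1' : HasDerivAt (fun y : ℝ => Real.Gamma (y+1))
      (Real.Gamma x + x * deriv Real.Gamma x) x := h2.congr_of_eventuallyEq heq
  have hder : deriv Real.Gamma (x+1) = Real.Gamma x + x * deriv Real.Gamma x :=
    h1.unique h1'
  have hΓ1 : Real.Gamma (x+1) = x * Real.Gamma x := Real.Gamma_add_one (ne_of_gt hx)
  rw [digamma, digamma, hder, hΓ1]
  field_simp
  ring

lemma digamma_le_log {x : ℝ} (hx : 0 < x) : digamma x ≤ Real.log x := by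
  have hΓ : 0 < Real.Gamma x := Real.Gamma_pos_of_pos hx
  have h := Real.convexOn_log_Gamma.le_slope_of_hasDerivAt (Set.mem_Ioi.mpr hx)
    (Set.mem_Ioi.mpr (by linarith : (0:ℝ) < x+1)) (by linarith) (hasDerivAt_logGamma hx)
  have hs : slope (Real.log ∘ Real.Gamma) x (x+1) = Real.log x := by
    rw [slope_def_field]
    simp only [Function.comp, Real.Gamma_add_one (ne_of_gt hx)]
    rw [Real.log_mul (ne_of_gt hx) (ne_of_gt hΓ)]
    field_simp
    ring
  rwa [hs] at h

lemma log_le_digamma {x : ℝ} (hx : 0 < x) : Real.log x ≤ digamma (x+1) := by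
  have hΓ : 0 < Real.Gamma x := Real.Gamma_pos_of_pos hx
  have h := Real.convexOn_log_Gamma.slope_le_of_hasDerivAt (Set.mem_Ioi.mpr hx)
    (Set.mem_Ioi.mpr (by linarith : (0:ℝ) < x+1)) (by linarith)
    (hasDerivAt_logGamma (by linarith : (0:ℝ) < x+1))
  have hs : slope (Real.log ∘ Real.Gamma) x (x+1) = Real.log x := by
    rw [slope_def_field]
    simp only [Function.comp, Real.Gamma_add_one (ne_of_gt hx)]
    rw [Real.log_mul (ne_of_gt hx) (ne_of_gt hΓ)]
    field_simp
    ring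
  rwa [hs] at h

lemma tendsto_log_ratio (c : ℝ) :
    Tendsto (fun n : ℕ => Real.log ((n:ℝ) + c) - Real.log n) atTop (𝓝 0) := by
  have h1 : Tendsto (fun n : ℕ => 1 + c * (1/(n:ℝ))) atTop (𝓝 1) := by
    have := tendsto_one_div_atTop_nhds_zero_nat.const_mul c
    simpa using (tendsto_const_nhds (x := (1:ℝ))).add this
  have h2 : Tendsto (fun n : ℕ => Real.log (1 + c * (1/(n:ℝ)))) atTop (𝓝 0) := by
    have := h1.log one_ne_zero
    simpa using this
  apply h2.congr'
  filter_upwards [eventually_gt_atTop (⌈|c|⌉₊ + 1)] with n hn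
  have hn' : (⌈|c|⌉₊:ℝ) + 1 ≤ (n:ℝ) := by exact_mod_cast hn.le
  have hc : |c| + 1 ≤ (n:ℝ) := le_trans (by linarith [Nat.le_ceil |c|]) hn'
  have habs := abs_le.mp (le_refl |c|)
  have hnpos : (0:ℝ) < n := by linarith [abs_nonneg c]
  have hncpos : (0:ℝ) < (n:ℝ) + c := by cases' abs_le.mp (le_refl |c|) with h _; linarith
  have : 1 + c * (1/(n:ℝ)) = ((n:ℝ) + c) / n := by field_simp
  rw [this, Real.log_div hncpos.ne' hnpos.ne']

lemma digamma_eq_diS {x : ℝ} (hx : 0 < x) : digamma x = diS x := by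
  set γ := Real.eulerMascheroniConstant with hγ
  set d := digamma x - diS x with hd
  have hshift : ∀ n : ℕ, digamma (x + n) - diS (x + n) = d := by
    intro n
    induction n with
    | zero => simp [hd]
    | succ m ih =>
        have hpos : (0:ℝ) < x + m := by positivity
        have : x + (m+1:ℕ) = (x + m) + 1 := by push_cast; ring
        rw [this, digamma_rec hpos, diS_rec hpos]
        linarith
  set k := ⌈x⌉₊ with hk
  have hxk : x ≤ k := Nat.le_ceil x
  -- upper bound
  have hub : ∀ n : ℕ, d ≤ Real.log (x + n + 1) + γ - (harmonic n : ℝ) := by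
    intro n
    have hp : (0:ℝ) < x + n + 1 := by positivity
    have h1 : digamma (x + n + 1) ≤ Real.log (x + n + 1) := digamma_le_log hp
    have h2 : diS ((n:ℝ) + 1) ≤ diS (x + n + 1) :=
      diS_mono (by positivity) (by linarith)
    rw [diS_nat n] at h2
    have h3 := hshift (n+1)
    push_cast at h3
    have : x + (n + 1 : ℝ) = x + n + 1 := by ring
    rw [this] at h3
    linarith
  -- lower bound
  have hlb : ∀ n : ℕ, Real.log (x + n) + γ - (harmonic (n + k) : ℝ) ≤ d := by
    intro n
    have hp : (0:ℝ) < x + n := by positivity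
    have h1 : Real.log (x + n) ≤ digamma ((x + n) + 1) := log_le_digamma hp
    have h2 : diS (x + n + 1) ≤ diS (((n + k : ℕ) : ℝ) + 1) := by
      apply diS_mono (by positivity)
      push_cast
      linarith
    rw [diS_nat (n + k)] at h2
    have h3 := hshift (n+1)
    push_cast at h3
    have he : x + (n + 1 : ℝ) = (x + n) + 1 := by ring
    rw [he] at h3
    linarith
  -- limits
  have hH : Tendsto (fun n : ℕ => (harmonic n : ℝ) - Real.log n) atTop (𝓝 γ) :=
    Real.tendsto_harmonic_sub_log
  have hub_t : Tendsto (fun n : ℕ => Real.log (x + n + 1) + γ - (harmonic n : ℝ))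
      atTop (𝓝 0) := by
    have h1 := tendsto_log_ratio (x + 1)
    have := h1.sub (hH.sub_const γ)
    have heq : (fun n : ℕ => (Real.log ((n:ℝ) + (x+1)) - Real.log n)
        - ((harmonic n : ℝ) - Real.log n - γ))
        = fun n : ℕ => Real.log (x + n + 1) + γ - (harmonic n : ℝ) := by
      funext n; ring_nf
    rw [heq] at this
    simpa using this
  have hlb_t : Tendsto (fun n : ℕ => Real.log (x + n) + γ - (harmonic (n + k) : ℝ))
      atTop (𝓝 0) := by
    have h1 := tendsto_log_ratio x
    have h2 : Tendsto (fun n : ℕ => (harmonic (n + k) : ℝ) - Real.log ((n + k : ℕ)))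
        atTop (𝓝 γ) := hH.comp (tendsto_add_atTop_nat k)
    have h3 := tendsto_log_ratio (k : ℝ)
    have hcomb := (h1.sub (h2.sub_const γ)).sub h3
    have heq : (fun n : ℕ => (Real.log ((n:ℝ) + x) - Real.log n)
        - ((harmonic (n + k) : ℝ) - Real.log ((n + k : ℕ)) - γ)
        - (Real.log ((n:ℝ) + (k:ℝ)) - Real.log n))
        = fun n : ℕ => Real.log (x + n) + γ - (harmonic (n + k) : ℝ) := by
      funext n; push_cast; ring_nf
    rw [heq] at hcomb
    simpa using hcomb
  have hd_le : d ≤ 0 := ge_of_tendsto hub_t (Eventually.of_forall hub)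
  have hd_ge : 0 ≤ d := le_of_tendsto hlb_t (Eventually.of_forall hlb)
  have : d = 0 := le_antisymm hd_le hd_ge
  rw [hd] at this
  linarith

lemma hasDerivAt_digamma {x : ℝ} (hx : 0 < x) : HasDerivAt digamma (triS x) x := by
  have hx2 : 0 < x/2 := by linarith
  have hmem : x ∈ Set.Ioi (x/2) := by simp [Set.mem_Ioi]; linarith
  have hS : HasDerivAt (fun y : ℝ => ∑' n : ℕ, (1/((n:ℝ)+1) - 1/((n:ℝ)+y)))
      (∑' n : ℕ, 1/((n:ℝ)+x)^2) x := by
    refine hasDerivAt_tsum_of_isPreconnected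
      (u := fun n : ℕ => 1/((n:ℝ)+x/2)^2)
      (g := fun (n : ℕ) (y : ℝ) => 1/((n:ℝ)+1) - 1/((n:ℝ)+y))
      (g' := fun (n : ℕ) (y : ℝ) => 1/((n:ℝ)+y)^2)
      (summable_triS hx2) isOpen_Ioi isPreconnected_Ioi ?_ ?_ hmem (summable_diS hx) hmem
    · intro n y hy
      have hy0 : 0 < y := lt_trans hx2 hy
      have hny : (0:ℝ) < (n:ℝ) + y := by positivity
      have h1 : HasDerivAt (fun z : ℝ => (n:ℝ) + z) 1 y := (hasDerivAt_id y).const_add _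
      have h2 := h1.inv hny.ne'
      have h3 := h2.const_sub (1/((n:ℝ)+1))
      have he : (fun z : ℝ => 1/((n:ℝ)+1) - ((n:ℝ)+z)⁻¹)
          = fun z : ℝ => 1/((n:ℝ)+1) - 1/((n:ℝ)+z) := by
        funext z; simp [one_div]
      simp only [Pi.inv_apply] at h3
      rw [he] at h3
      convert h3 using 1
      field_simp
    · intro n y hy
      have hy' : x/2 < y := hy
      have hy0 : 0 < y := lt_trans hx2 hy'
      have h1 : (0:ℝ) < (n:ℝ) + x/2 := nx_pos hx2 n
      have h2 : (0:ℝ) < (n:ℝ) + y := by positivity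
      rw [Real.norm_eq_abs, abs_of_pos (by positivity)]
      apply div_le_div_of_nonneg_left one_pos.le (by positivity)
      apply pow_le_pow_left₀ h1.le (by linarith)
  have hdiS : HasDerivAt diS (triS x) x := by
    have := hS.const_add (-Real.eulerMascheroniConstant)
    exact this
  apply hdiS.congr_of_eventuallyEq
  filter_upwards [isOpen_Ioi.mem_nhds (Set.mem_Ioi.mpr hx)] with y hy
  exact digamma_eq_diS hy

lemma hasSum_basel_shift :
    HasSum (fun n : ℕ => 1/((n:ℝ)+2)^2) (Real.pi^2/6 - 1) := by
  have h := hasSum_zeta_two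
  have : HasSum (fun n : ℕ => (1:ℝ)/((n + 2 : ℕ):ℝ)^2) (Real.pi^2/6 - 1) := by
    rw [hasSum_nat_add_iff (f := fun n : ℕ => (1:ℝ)/(n:ℝ)^2) 2]
    convert h using 1
    · rfl
    rw [Finset.sum_range_succ, Finset.sum_range_one]
    norm_num
  convert this using 2 with n
  push_cast
  ring


end DigammaAux

theorem neg_g2_deriv_ge (x : ℝ) (hx : x ∈ Set.Ioo (0 : ℝ) 1) :
    Real.pi ^ 2 / 6 - 1 ≤
      deriv digamma (x + 1) + 2 * (digamma (2 * x) - digamma x)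
        + 2 * x * (2 * deriv digamma (2 * x) - deriv digamma x) ∧
    0 < Real.pi ^ 2 / 6 - 1 := by
  obtain ⟨hx0, hx1⟩ := hx
  have h2x : (0:ℝ) < 2*x := by linarith
  have hx1' : (0:ℝ) < x+1 := by linarith
  constructor
  · rw [(hasDerivAt_digamma hx1').deriv, (hasDerivAt_digamma h2x).deriv,
      (hasDerivAt_digamma hx0).deriv, digamma_eq_diS h2x, digamma_eq_diS hx0]
    set E := triS (x+1) + 2*(diS (2*x) - diS x) + 2*x*(2*triS (2*x) - triS x) with hE
    have hdiff : HasSum (fun n : ℕ => 1/((n:ℝ)+x) - 1/((n:ℝ)+2*x))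
        (diS (2*x) - diS x) := by
      have h := (summable_diS h2x).hasSum.sub (summable_diS hx0).hasSum
      have hfun : (fun n : ℕ => (1/((n:ℝ)+1) - 1/((n:ℝ)+2*x))
          - (1/((n:ℝ)+1) - 1/((n:ℝ)+x)))
          = fun n : ℕ => 1/((n:ℝ)+x) - 1/((n:ℝ)+2*x) := by
        funext n; ring
      rw [hfun] at h
      have : diS (2*x) - diS x
          = (∑' n : ℕ, (1/((n:ℝ)+1) - 1/((n:ℝ)+2*x)))
            - ∑' n : ℕ, (1/((n:ℝ)+1) - 1/((n:ℝ)+x)) := by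
        simp only [diS]; ring
      rwa [← this] at h
    have h1 : HasSum (fun n : ℕ => 1/((n:ℝ)+(x+1))^2) (triS (x+1)) :=
      (summable_triS hx1').hasSum
    have h2 : HasSum (fun n : ℕ => 1/((n:ℝ)+x)^2) (triS x) :=
      (summable_triS hx0).hasSum
    have h3 : HasSum (fun n : ℕ => 1/((n:ℝ)+2*x)^2) (triS (2*x)) :=
      (summable_triS h2x).hasSum
    have Ht : HasSum (fun n : ℕ =>
        1/((n:ℝ)+(x+1))^2 + 2*(1/((n:ℝ)+x) - 1/((n:ℝ)+2*x))
          + 2*x*(2*(1/((n:ℝ)+2*x)^2) - 1/((n:ℝ)+x)^2)) E :=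
      (h1.add (hdiff.mul_left 2)).add (((h3.mul_left 2).sub h2).mul_left (2*x))
    have hterm : ∀ n : ℕ, 1/((n:ℝ)+2)^2 ≤
        1/((n:ℝ)+(x+1))^2 + 2*(1/((n:ℝ)+x) - 1/((n:ℝ)+2*x))
          + 2*x*(2*(1/((n:ℝ)+2*x)^2) - 1/((n:ℝ)+x)^2) := by
      intro n
      have hp : (0:ℝ) < (n:ℝ)+x := by positivity
      have hq : (0:ℝ) < (n:ℝ)+2*x := by positivity
      have hr : (0:ℝ) < (n:ℝ)+(x+1) := by positivity
      have hfirst : 1/((n:ℝ)+2)^2 ≤ 1/((n:ℝ)+(x+1))^2 := by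
        apply div_le_div_of_nonneg_left one_pos.le (by positivity)
        apply pow_le_pow_left₀ hr.le (by linarith)
      have key : 2*(1/((n:ℝ)+x) - 1/((n:ℝ)+2*x))
          + 2*x*(2*(1/((n:ℝ)+2*x)^2) - 1/((n:ℝ)+x)^2)
          = 2*x*(n:ℝ)*(2*(n:ℝ)+3*x) / (((n:ℝ)+x)^2*((n:ℝ)+2*x)^2) := by
        field_simp
        ring
      have hpos : (0:ℝ) ≤ 2*x*(n:ℝ)*(2*(n:ℝ)+3*x) / (((n:ℝ)+x)^2*((n:ℝ)+2*x)^2) := by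
        positivity
      linarith
    have := hasSum_le hterm hasSum_basel_shift Ht
    linarith [this]
  · nlinarith [Real.pi_gt_three]
end

section
/- g₃(1/4) = -2 - 3π/32 + (25/8)log 2, and this value is strictly negative. -/
private lemma g3q_pos_ne_neg_nat {x : ℝ} (hx : 0 < x) : ∀ m : ℕ, x ≠ -m := by
  intro m h
  have : (0:ℝ) ≤ m := m.cast_nonneg
  rw [h] at hx
  linarith

set_option maxHeartbeats 1000000

theorem g3_one_quarter :
    g3 (1 / 4) = -2 - 3 * Real.pi / 32 + 25 / 8 * Real.log 2 ∧ g3 (1 / 4) < 0 := by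
  have pi_pos := Real.pi_pos
  set γ := Real.eulerMascheroniConstant with hγdef
  set L := Real.log 2 with hLdef
  set A := Real.Gamma (1/4) with hAdef
  set B := Real.Gamma (3/4) with hBdef
  set a := deriv Real.Gamma (1/4) with hadef
  set b := deriv Real.Gamma (3/4) with hbdef
  have h14 : HasDerivAt Real.Gamma a (1/4) :=
    (Real.differentiableAt_Gamma (g3q_pos_ne_neg_nat (by norm_num))).hasDerivAt
  have h34 : HasDerivAt Real.Gamma b (3/4) :=
    (Real.differentiableAt_Gamma (g3q_pos_ne_neg_nat (by norm_num))).hasDerivAt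
  have h12 : HasDerivAt Real.Gamma (-Real.sqrt Real.pi * (γ + 2 * L)) (1/2) :=
    Real.hasDerivAt_Gamma_one_half
  have hA : 0 < A := Real.Gamma_pos_of_pos (by norm_num)
  have hB : 0 < B := Real.Gamma_pos_of_pos (by norm_num)
  have hππ : Real.sqrt Real.pi * Real.sqrt Real.pi = Real.pi :=
    Real.mul_self_sqrt pi_pos.le
  have h22 : Real.sqrt 2 * Real.sqrt 2 = 2 := Real.mul_self_sqrt (by norm_num)
  -- Γ(1/4)Γ(3/4) = π√2 (reflection formula)
  have hAB : A * B = Real.pi * Real.sqrt 2 := by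
    have h := Real.Gamma_mul_Gamma_one_sub (1/4)
    rw [show (1 - 1/4 : ℝ) = 3/4 by norm_num, show (Real.pi * (1/4) : ℝ) = Real.pi/4 by ring,
      Real.sin_pi_div_four, ← hAdef, ← hBdef] at h
    rw [h, div_eq_iff (by positivity)]
    nlinarith [Real.sqrt_nonneg 2]
  -- differentiated reflection formula at 1/4
  have E2 : a * B - A * b = -(Real.pi^2 * Real.sqrt 2) := by
    have h34' : HasDerivAt Real.Gamma b (1 - 1/4 : ℝ) := by
      rw [show (1 - 1/4 : ℝ) = 3/4 by norm_num]; exact h34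
    have hinner : HasDerivAt (fun s : ℝ => 1 - s) (-1) (1/4) := by
      simpa using (hasDerivAt_id (1/4:ℝ)).const_sub 1
    have hcomp : HasDerivAt (fun s : ℝ => Real.Gamma (1 - s)) (b * (-1)) (1/4) :=
      HasDerivAt.comp _ h34' hinner
    have hL : HasDerivAt (fun s : ℝ => Real.Gamma s * Real.Gamma (1 - s))
        (a * Real.Gamma (1 - 1/4) + Real.Gamma (1/4) * (b * (-1))) (1/4) := h14.mul hcomp
    have hsin : HasDerivAt (fun s : ℝ => Real.sin (Real.pi * s))
        (Real.cos (Real.pi * (1/4)) * Real.pi) (1/4) := by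
      have := HasDerivAt.comp (1/4:ℝ) (Real.hasDerivAt_sin (Real.pi * (1/4)))
        ((hasDerivAt_id (1/4:ℝ)).const_mul Real.pi)
      simpa [Function.comp_def] using this
    have hsne : Real.sin (Real.pi * (1/4)) ≠ 0 := by
      rw [show (Real.pi * (1/4) : ℝ) = Real.pi/4 by ring, Real.sin_pi_div_four]
      positivity
    have hR : HasDerivAt (fun s : ℝ => Real.pi / Real.sin (Real.pi * s))
        ((0 * Real.sin (Real.pi * (1/4)) - Real.pi * (Real.cos (Real.pi * (1/4)) * Real.pi)) /
          (Real.sin (Real.pi * (1/4)))^2) (1/4) :=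
      (hasDerivAt_const _ Real.pi).div hsin hsne
    have hfun : (fun s : ℝ => Real.Gamma s * Real.Gamma (1 - s))
        = fun s => Real.pi / Real.sin (Real.pi * s) := funext Real.Gamma_mul_Gamma_one_sub
    have heq := (hfun ▸ hL).unique hR
    rw [show (1 - 1/4 : ℝ) = 3/4 by norm_num, show (Real.pi * (1/4) : ℝ) = Real.pi/4 by ring,
      Real.sin_pi_div_four, Real.cos_pi_div_four, ← hAdef, ← hBdef] at heq
    field_simp at heq
    linear_combination (Real.sqrt 2 / 2) * heq - (a * B - A * b) / 2 * h22
  -- differentiated Legendre duplication formula at 1/4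
  have E3 : a * B + A * b = -(2 * Real.pi * Real.sqrt 2 * (γ + 3 * L)) := by
    have h34' : HasDerivAt Real.Gamma b (1/4 + 1/2 : ℝ) := by
      rw [show (1/4 + 1/2 : ℝ) = 3/4 by norm_num]; exact h34
    have hcomp : HasDerivAt (fun s : ℝ => Real.Gamma (s + 1/2)) (b * 1) (1/4) := by
      have hin : HasDerivAt (fun s : ℝ => s + 1/2) 1 (1/4) := by
        simpa using (hasDerivAt_id (1/4:ℝ)).add_const (1/2)
      have := HasDerivAt.comp (x := (1/4:ℝ)) (h₂ := Real.Gamma) (h := fun s : ℝ => s + 1/2) h34' hin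
      simpa [Function.comp_def] using this
    have hL : HasDerivAt (fun s : ℝ => Real.Gamma s * Real.Gamma (s + 1/2))
        (a * Real.Gamma (1/4 + 1/2) + Real.Gamma (1/4) * (b * 1)) (1/4) := h14.mul hcomp
    have h12' : HasDerivAt Real.Gamma (-Real.sqrt Real.pi * (γ + 2 * L)) (2 * (1/4) : ℝ) := by
      rw [show (2 * (1/4) : ℝ) = 1/2 by norm_num]; exact h12
    have hu : HasDerivAt (fun s : ℝ => Real.Gamma (2 * s))
        (-Real.sqrt Real.pi * (γ + 2 * L) * 2) (1/4) := by
      have := HasDerivAt.comp (1/4:ℝ) h12' ((hasDerivAt_id (1/4:ℝ)).const_mul 2)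
      simpa [Function.comp_def] using this
    have hvout : HasDerivAt (fun x : ℝ => (2:ℝ) ^ x)
        ((2:ℝ) ^ (1 - 2 * (1/4:ℝ)) * L) (1 - 2 * (1/4:ℝ)) :=
      (Real.hasStrictDerivAt_const_rpow (by norm_num : (0:ℝ) < 2) _).hasDerivAt
    have hvin : HasDerivAt (fun s : ℝ => 1 - 2 * s) (-2) (1/4) := by
      simpa using ((hasDerivAt_id (1/4:ℝ)).const_mul 2).const_sub 1
    have hv : HasDerivAt (fun s : ℝ => (2:ℝ) ^ (1 - 2 * s))
        ((2:ℝ) ^ (1 - 2 * (1/4:ℝ)) * L * (-2)) (1/4) :=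
      HasDerivAt.comp _ hvout hvin
    have hR : HasDerivAt
        (fun s : ℝ => Real.Gamma (2 * s) * (2:ℝ) ^ (1 - 2 * s) * Real.sqrt Real.pi)
        ((-Real.sqrt Real.pi * (γ + 2 * L) * 2 * (2:ℝ) ^ (1 - 2 * (1/4:ℝ))
          + Real.Gamma (2 * (1/4:ℝ)) * ((2:ℝ) ^ (1 - 2 * (1/4:ℝ)) * L * (-2)))
          * Real.sqrt Real.pi) (1/4) := (hu.mul hv).mul_const _
    have hfun : (fun s : ℝ => Real.Gamma s * Real.Gamma (s + 1/2))
        = fun s : ℝ => Real.Gamma (2 * s) * (2:ℝ) ^ (1 - 2 * s) * Real.sqrt Real.pi :=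
      funext Real.Gamma_mul_Gamma_add_half
    have heq := (hfun ▸ hL).unique hR
    rw [show (1/4 + 1/2 : ℝ) = 3/4 by norm_num, show (1 - 2 * (1/4:ℝ)) = 1/2 by norm_num,
      show (2 * (1/4:ℝ)) = 1/2 by norm_num, Real.Gamma_one_half_eq,
      ← Real.sqrt_eq_rpow, ← hAdef, ← hBdef] at heq
    linear_combination heq - 2 * Real.sqrt 2 * (γ + 3 * L) * hππ
  -- deriv Gamma at 5/4 via the recurrence
  have h54 : HasDerivAt Real.Gamma (deriv Real.Gamma (5/4)) (5/4) :=
    (Real.differentiableAt_Gamma (g3q_pos_ne_neg_nat (by norm_num))).hasDerivAt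
  have E1 : deriv Real.Gamma (5/4) = A + (1/4) * a := by
    have h54' : HasDerivAt Real.Gamma (deriv Real.Gamma (5/4)) (1/4 + 1 : ℝ) := by
      rw [show (1/4 + 1 : ℝ) = 5/4 by norm_num]; exact h54
    have hin : HasDerivAt (fun s : ℝ => s + 1) 1 (1/4) := by
      simpa using (hasDerivAt_id (1/4:ℝ)).add_const 1
    have hL : HasDerivAt (fun s : ℝ => Real.Gamma (s + 1)) (deriv Real.Gamma (5/4) * 1) (1/4) := by
      have := HasDerivAt.comp (x := (1/4:ℝ)) (h₂ := Real.Gamma) (h := fun s : ℝ => s + 1) h54' hin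
      simpa [Function.comp_def] using this
    have hev : (fun s : ℝ => s * Real.Gamma s) =ᶠ[nhds (1/4:ℝ)] (fun s : ℝ => Real.Gamma (s + 1)) := by
      filter_upwards [eventually_ne_nhds (by norm_num : (1/4:ℝ) ≠ 0)] with x hx
      rw [Real.Gamma_add_one hx]
    have hL' : HasDerivAt (fun s : ℝ => s * Real.Gamma s) (deriv Real.Gamma (5/4) * 1) (1/4) :=
      hL.congr_of_eventuallyEq hev
    have hR : HasDerivAt (fun s : ℝ => s * Real.Gamma s) (1 * Real.Gamma (1/4) + (1/4) * a) (1/4) :=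
      (hasDerivAt_id (1/4:ℝ)).mul h14
    have := hL'.unique hR
    rw [← hAdef] at this
    linarith [this]
  have hG54 : Real.Gamma (5/4) = (1/4) * A := by
    rw [show (5/4:ℝ) = 1/4 + 1 by norm_num, Real.Gamma_add_one (by norm_num), hAdef]
  -- solve for a and b
  have ha : a = A * (-γ - 3 * L - Real.pi/2) := by
    have hab : a * B = (A * (-γ - 3 * L - Real.pi/2)) * B := by
      have : a * B = Real.pi * Real.sqrt 2 * (-γ - 3 * L - Real.pi/2) := by nlinarith [E2, E3]
      rw [this, mul_comm (A * _) B, ← mul_assoc, mul_comm B A, hAB]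
    exact mul_right_cancel₀ hB.ne' hab
  have hb : b = B * (-γ - 3 * L + Real.pi/2) := by
    have hab : A * b = A * (B * (-γ - 3 * L + Real.pi/2)) := by
      have : A * b = Real.pi * Real.sqrt 2 * (-γ - 3 * L + Real.pi/2) := by nlinarith [E2, E3]
      rw [this, ← mul_assoc, hAB]
    exact mul_left_cancel₀ hA.ne' hab
  -- digamma values
  have hd14 : digamma (1/4) = -γ - 3 * L - Real.pi/2 := by
    show deriv Real.Gamma (1/4) / Real.Gamma (1/4) = _
    rw [← hadef, ← hAdef, ha, mul_comm, mul_div_assoc, div_self hA.ne', mul_one]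
  have hd34 : digamma (3/4) = -γ - 3 * L + Real.pi/2 := by
    show deriv Real.Gamma (3/4) / Real.Gamma (3/4) = _
    rw [← hbdef, ← hBdef, hb, mul_comm, mul_div_assoc, div_self hB.ne', mul_one]
  have hπne : Real.sqrt Real.pi ≠ 0 := by positivity
  have hd12 : digamma (1/2) = -γ - 2 * L := by
    show deriv Real.Gamma (1/2) / Real.Gamma (1/2) = _
    rw [h12.deriv, Real.Gamma_one_half_eq]
    field_simp
    ring
  have hd54 : digamma (5/4) = 4 + (-γ - 3 * L - Real.pi/2) := by
    show deriv Real.Gamma (5/4) / Real.Gamma (5/4) = _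
    rw [E1, hG54, ha, div_eq_iff (by positivity : ((1:ℝ)/4 * A) ≠ 0)]
    ring
  have hval : g3 (1/4) = -2 - 3 * Real.pi / 32 + 25 / 8 * L := by
    rw [g3, show ((1:ℝ)/4 + 1) = 5/4 by norm_num, show (2 * ((1:ℝ)/4)) = 1/2 by norm_num,
      show (3 * ((1:ℝ)/4)) = 3/4 by norm_num, hd14, hd34, hd12, hd54, ← hγdef]
    ring
  refine ⟨hval, ?_⟩
  rw [hval]
  have hlog : L < 0.6931471808 := Real.log_two_lt_d9
  nlinarith [Real.pi_gt_three, hlog]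
end
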